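/- arXiv:2209.02988 — 4 statements merged into one kernel-verified Lean document; each statement's English description precedes it below -/
import Mathlib

section
/- Let V be a finite set partitioned into U₁, U₂, U₃, U₄ and let U* ⊆ V. Let F be a linear forest on V such that every vertex of U* has in-degree and out-degree exactly 1 in F, V⁺(F) ⊆ U₁∖U* and V⁻(F) ⊆ U₄∖U*. For each i ∈ {1,2,3}, let M_i be a perfect matching, with all edges oriented from U_i to U_{i+1}, between the sets {v ∈ U_i∖U* : d_F⁺(v) = 0} and {v ∈ U_{i+1}∖U* : d_F⁻(v) = 0}, and suppose that F, M₁, M₂, M₃ are pairwise edge-disjoint. Then F' := F ∪ M₁ ∪ M₂ ∪ M₃ is a linear forest with V(F') = V, V⁺(F') ⊆ U₁∖U*, V⁻(F') ⊆ U₄∖U*, and every internal vertex of F' lying in (U₁ ∪ U₄)∖U* belongs to V(F). -/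
open Finset

variable {V : Type}

/-- Out-degree of `v` in the digraph with edge set `F`. -/
def outDeg [DecidableEq V] (F : Finset (V × V)) (v : V) : ℕ :=
  (F.filter (fun e => e.1 = v)).card

/-- In-degree of `v` in the digraph with edge set `F`. -/
def inDeg [DecidableEq V] (F : Finset (V × V)) (v : V) : ℕ :=
  (F.filter (fun e => e.2 = v)).card

/-- The set of vertices incident to an edge of `F`. -/
def verts [DecidableEq V] (F : Finset (V × V)) : Finset V :=
  F.image Prod.fst ∪ F.image Prod.snd

/-- The number of edges of `T` directed from `X` to `Y`. -/
def eCount [DecidableEq V] (T : Finset (V × V)) (X Y : Finset V) : ℕ :=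
  (T.filter (fun e => e.1 ∈ X ∧ e.2 ∈ Y)).card

/-- `V⁺(F)`: starting points of the paths of a linear forest. -/
def startSet [Fintype V] [DecidableEq V] (F : Finset (V × V)) : Finset V :=
  Finset.univ.filter (fun v => outDeg F v = 1 ∧ inDeg F v = 0)

/-- `V⁻(F)`: ending points of the paths of a linear forest. -/
def endSet [Fintype V] [DecidableEq V] (F : Finset (V × V)) : Finset V :=
  Finset.univ.filter (fun v => inDeg F v = 1 ∧ outDeg F v = 0)

/-- `V⁰(F)`: internal vertices (in- and out-degree both 1). -/
def interiorSet [Fintype V] [DecidableEq V] (F : Finset (V × V)) : Finset V :=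
  Finset.univ.filter (fun v => outDeg F v = 1 ∧ inDeg F v = 1)

/-- `F` contains a directed cycle. -/
def HasCycle (F : Finset (V × V)) : Prop :=
  ∃ (v : V) (l : List V), (v :: l).Nodup ∧
    (v :: l).Chain' (fun a b => (a, b) ∈ F) ∧
    ((v :: l).getLast (List.cons_ne_nil v l), v) ∈ F

/-- A linear forest: a digraph whose components are directed paths. -/
def IsLinearForest [DecidableEq V] (F : Finset (V × V)) : Prop :=
  (∀ v, outDeg F v ≤ 1) ∧ (∀ v, inDeg F v ≤ 1) ∧ ¬ HasCycle F

/-- A directed path in `F`, recorded as its (nodup) list of vertices. -/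
def IsPathList (F : Finset (V × V)) (l : List V) : Prop :=
  2 ≤ l.length ∧ l.Nodup ∧ l.Chain' (fun a b => (a, b) ∈ F)

/-- The edge set of the cycle visiting the vertices of `l` in order. -/
def cycleEdges [DecidableEq V] (l : List V) : Finset (V × V) :=
  (l.zip (l.rotate 1)).toFinset

/-- `C` is a directed Hamilton cycle on the vertex set `X`. -/
def IsHamCycleOn [DecidableEq V] (C : Finset (V × V)) (X : Finset V) : Prop :=
  ∃ l : List V, l ≠ [] ∧ l.Nodup ∧ l.toFinset = X ∧ C = cycleEdges l

/-- The edge set of the path visiting the vertices of `l` in order. -/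
def listEdges [DecidableEq V] (l : List V) : Finset (V × V) :=
  (l.zip l.tail).toFinset

/-- `F` is a subdivision of `D`: `F` is obtained from `D` by replacing each edge
by a directed path with the same endpoints, where the paths are internally
vertex-disjoint and their internal vertices avoid `V(D)`. -/
def IsSubdivisionOf [DecidableEq V] (F D : Finset (V × V)) : Prop :=
  ∃ P : V × V → List V,
    (∀ e ∈ D, (P e).head? = some e.1 ∧ (P e).getLast? = some e.2 ∧
      (P e).Nodup ∧ 2 ≤ (P e).length) ∧
    (∀ e ∈ D, ∀ x ∈ (P e).tail.dropLast, x ∉ verts D) ∧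
    (∀ e ∈ D, ∀ e' ∈ D, e ≠ e' → ∀ x ∈ (P e).tail.dropLast, x ∉ (P e').tail.dropLast) ∧
    F = D.biUnion (fun e => listEdges (P e))

/-- `M` is a perfect matching, all of whose edges are oriented from `Sp` to `Sm`,
between the sets `Sp` and `Sm`. -/
def MatchingBetween [DecidableEq V] (M : Finset (V × V)) (Sp Sm : Finset V) : Prop :=
  (∀ e ∈ M, e.1 ∈ Sp ∧ e.2 ∈ Sm) ∧
  (∀ v ∈ Sp, outDeg M v = 1) ∧
  (∀ v ∈ Sm, inDeg M v = 1)

section MyHelpers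
variable [DecidableEq V]

lemma myOutDeg_union {A B : Finset (V × V)} (h : Disjoint A B) (v : V) :
    outDeg (A ∪ B) v = outDeg A v + outDeg B v := by
  unfold outDeg
  rw [Finset.filter_union, Finset.card_union_of_disjoint (Finset.disjoint_filter_filter h)]

lemma myInDeg_union {A B : Finset (V × V)} (h : Disjoint A B) (v : V) :
    inDeg (A ∪ B) v = inDeg A v + inDeg B v := by
  unfold inDeg
  rw [Finset.filter_union, Finset.card_union_of_disjoint (Finset.disjoint_filter_filter h)]

lemma myOutDeg_zero {A : Finset (V × V)} {v : V} (h : ∀ e ∈ A, e.1 ≠ v) :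
    outDeg A v = 0 := by
  unfold outDeg
  rw [Finset.card_eq_zero, Finset.filter_eq_empty_iff]
  exact h

lemma myInDeg_zero {A : Finset (V × V)} {v : V} (h : ∀ e ∈ A, e.2 ≠ v) :
    inDeg A v = 0 := by
  unfold inDeg
  rw [Finset.card_eq_zero, Finset.filter_eq_empty_iff]
  exact h

lemma myOutDeg_ne_zero {A : Finset (V × V)} {e : V × V} (he : e ∈ A) :
    outDeg A e.1 ≠ 0 :=
  Finset.card_ne_zero_of_mem (Finset.mem_filter.mpr ⟨he, rfl⟩)

lemma myInDeg_ne_zero {A : Finset (V × V)} {e : V × V} (he : e ∈ A) :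
    inDeg A e.2 ≠ 0 :=
  Finset.card_ne_zero_of_mem (Finset.mem_filter.mpr ⟨he, rfl⟩)

lemma myMem_verts_of_out {A : Finset (V × V)} {v : V} (h : outDeg A v ≠ 0) :
    v ∈ verts A := by
  obtain ⟨e, he⟩ := Finset.card_ne_zero.mp h
  rw [Finset.mem_filter] at he
  exact Finset.mem_union_left _ (Finset.mem_image.mpr ⟨e, he.1, he.2⟩)

lemma myMem_verts_of_in {A : Finset (V × V)} {v : V} (h : inDeg A v ≠ 0) :
    v ∈ verts A := by
  obtain ⟨e, he⟩ := Finset.card_ne_zero.mp h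
  rw [Finset.mem_filter] at he
  exact Finset.mem_union_right _ (Finset.mem_image.mpr ⟨e, he.1, he.2⟩)

end MyHelpers

/-- Closing up a linear forest by three perfect matchings yields a
spanning linear forest whose paths start in `U₁ ∖ U*` and end in `U₄ ∖ U*`, and whose
new internal vertices in `(U₁ ∪ U₄) ∖ U*` all lie in `V(F)`. -/



theorem matchings_extend_linear_forest {V : Type} [Fintype V] [DecidableEq V]
    (U : Fin 4 → Finset V) (Ustar : Finset V)
    (hdisj : ∀ i j, i ≠ j → Disjoint (U i) (U j))
    (hcover : U 0 ∪ U 1 ∪ U 2 ∪ U 3 = Finset.univ)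
    (hUstar : Ustar ⊆ Finset.univ)
    (F : Finset (V × V))
    (hF : IsLinearForest F)
    (hdeg : ∀ v ∈ Ustar, outDeg F v = 1 ∧ inDeg F v = 1)
    (hstart : startSet F ⊆ U 0 \ Ustar)
    (hend : endSet F ⊆ U 3 \ Ustar)
    (M : Fin 3 → Finset (V × V))
    (hM : ∀ i : Fin 3,
      MatchingBetween (M i)
        ((U i.castSucc \ Ustar).filter (fun v => outDeg F v = 0))
        ((U i.succ \ Ustar).filter (fun v => inDeg F v = 0)))
    (hMF : ∀ i, Disjoint F (M i))
    (hMM : ∀ i j, i ≠ j → Disjoint (M i) (M j)) :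
    IsLinearForest (F ∪ M 0 ∪ M 1 ∪ M 2) ∧
    verts (F ∪ M 0 ∪ M 1 ∪ M 2) = Finset.univ ∧
    startSet (F ∪ M 0 ∪ M 1 ∪ M 2) ⊆ U 0 \ Ustar ∧
    endSet (F ∪ M 0 ∪ M 1 ∪ M 2) ⊆ U 3 \ Ustar ∧
    ∀ v ∈ interiorSet (F ∪ M 0 ∪ M 1 ∪ M 2),
      v ∈ (U 0 ∪ U 3) \ Ustar → v ∈ verts F := by
  classical
  -- disjointness for degree splitting
  have hd1 : Disjoint (F ∪ M 0) (M 1) :=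
    Finset.disjoint_union_left.mpr ⟨hMF 1, hMM 0 1 (by decide)⟩
  have hd2 : Disjoint (F ∪ M 0 ∪ M 1) (M 2) :=
    Finset.disjoint_union_left.mpr
      ⟨Finset.disjoint_union_left.mpr ⟨hMF 2, hMM 0 2 (by decide)⟩, hMM 1 2 (by decide)⟩
  have hout : ∀ v, outDeg (F ∪ M 0 ∪ M 1 ∪ M 2) v =
      outDeg F v + outDeg (M 0) v + outDeg (M 1) v + outDeg (M 2) v := by
    intro v
    rw [myOutDeg_union hd2, myOutDeg_union hd1, myOutDeg_union (hMF 0)]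
  have hin : ∀ v, inDeg (F ∪ M 0 ∪ M 1 ∪ M 2) v =
      inDeg F v + inDeg (M 0) v + inDeg (M 1) v + inDeg (M 2) v := by
    intro v
    rw [myInDeg_union hd2, myInDeg_union hd1, myInDeg_union (hMF 0)]
  -- membership facts
  have hmem : ∀ v : V, v ∈ U 0 ∨ v ∈ U 1 ∨ v ∈ U 2 ∨ v ∈ U 3 := by
    intro v
    have h : v ∈ U 0 ∪ U 1 ∪ U 2 ∪ U 3 := hcover ▸ Finset.mem_univ v
    simpa [Finset.mem_union, or_assoc] using h
  have hnm : ∀ (i j : Fin 4), i ≠ j → ∀ v : V, v ∈ U i → v ∉ U j :=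
    fun i j h v hv => Finset.disjoint_left.mp (hdisj i j h) hv
  -- matching endpoint facts (with Fin indices normalized)
  have hSp : ∀ i : Fin 3, ∀ e ∈ M i, e.1 ∈ U i.castSucc ∧ e.1 ∉ Ustar ∧ outDeg F e.1 = 0 := by
    intro i e he
    have h := ((hM i).1 e he).1
    simp only [Finset.mem_filter, Finset.mem_sdiff] at h
    exact ⟨h.1.1, h.1.2, h.2⟩
  have hSm : ∀ i : Fin 3, ∀ e ∈ M i, e.2 ∈ U i.succ ∧ e.2 ∉ Ustar ∧ inDeg F e.2 = 0 := by
    intro i e he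
    have h := ((hM i).1 e he).2
    simp only [Finset.mem_filter, Finset.mem_sdiff] at h
    exact ⟨h.1.1, h.1.2, h.2⟩
  have hMout1 : ∀ i : Fin 3, ∀ v, v ∈ U i.castSucc → v ∉ Ustar → outDeg F v = 0 →
      outDeg (M i) v = 1 := by
    intro i v h1 h2 h3
    exact (hM i).2.1 v (by simp [Finset.mem_filter, Finset.mem_sdiff, h1, h2, h3])
  have hMin1 : ∀ i : Fin 3, ∀ v, v ∈ U i.succ → v ∉ Ustar → inDeg F v = 0 →
      inDeg (M i) v = 1 := by
    intro i v h1 h2 h3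
    exact (hM i).2.2 v (by simp [Finset.mem_filter, Finset.mem_sdiff, h1, h2, h3])
  have hMout0 : ∀ i : Fin 3, ∀ v, ¬ (v ∈ U i.castSucc ∧ v ∉ Ustar ∧ outDeg F v = 0) →
      outDeg (M i) v = 0 := by
    intro i v h
    apply myOutDeg_zero
    intro e he hev
    exact h (hev ▸ hSp i e he)
  have hMin0 : ∀ i : Fin 3, ∀ v, ¬ (v ∈ U i.succ ∧ v ∉ Ustar ∧ inDeg F v = 0) →
      inDeg (M i) v = 0 := by
    intro i v h
    apply myInDeg_zero
    intro e he hev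
    exact h (hev ▸ hSm i e he)
  -- isolation facts
  have hiso_out : ∀ v, outDeg F v = 0 → v ∉ U 3 → inDeg F v = 0 := by
    intro v h1 h2
    by_contra h
    have hle := hF.2.1 v
    have h3 : inDeg F v = 1 := by omega
    have h4 : v ∈ endSet F := by
      simp [endSet, Finset.mem_filter, h3, h1]
    have h5 := hend h4
    rw [Finset.mem_sdiff] at h5
    exact h2 h5.1
  have hiso_in : ∀ v, inDeg F v = 0 → v ∉ U 0 → outDeg F v = 0 := by
    intro v h1 h2
    by_contra h
    have hle := hF.1 v
    have h3 : outDeg F v = 1 := by omega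
    have h4 : v ∈ startSet F := by
      simp [startSet, Finset.mem_filter, h3, h1]
    have h5 := hstart h4
    rw [Finset.mem_sdiff] at h5
    exact h2 h5.1
  -- degree formulas for the union
  have houtU3 : ∀ v ∈ U 3, outDeg (F ∪ M 0 ∪ M 1 ∪ M 2) v = outDeg F v := by
    intro v hv
    rw [hout v]
    have m0 : outDeg (M 0) v = 0 := hMout0 0 v (fun h => hnm 3 0 (by decide) v hv h.1)
    have m1 : outDeg (M 1) v = 0 := hMout0 1 v (fun h => hnm 3 1 (by decide) v hv h.1)
    have m2 : outDeg (M 2) v = 0 := hMout0 2 v (fun h => hnm 3 2 (by decide) v hv h.1)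
    omega
  have hinU0 : ∀ v ∈ U 0, inDeg (F ∪ M 0 ∪ M 1 ∪ M 2) v = inDeg F v := by
    intro v hv
    rw [hin v]
    have m0 : inDeg (M 0) v = 0 := hMin0 0 v (fun h => hnm 0 1 (by decide) v hv h.1)
    have m1 : inDeg (M 1) v = 0 := hMin0 1 v (fun h => hnm 0 2 (by decide) v hv h.1)
    have m2 : inDeg (M 2) v = 0 := hMin0 2 v (fun h => hnm 0 3 (by decide) v hv h.1)
    omega
  have houtN3 : ∀ v, v ∉ U 3 → outDeg (F ∪ M 0 ∪ M 1 ∪ M 2) v = 1 := by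
    intro v hv
    have hcase : ∃ i : Fin 3, v ∈ U i.castSucc := by
      rcases hmem v with h | h | h | h
      · exact ⟨0, h⟩
      · exact ⟨1, h⟩
      · exact ⟨2, h⟩
      · exact absurd h hv
    obtain ⟨i, hi⟩ := hcase
    have hothers : ∀ j : Fin 3, j ≠ i → outDeg (M j) v = 0 := by
      intro j hj
      exact hMout0 j v (fun h => hnm i.castSucc j.castSucc
        (fun hc => hj (Fin.castSucc_injective 3 hc).symm) v hi h.1)
    rw [hout v]
    by_cases h0 : outDeg F v = 0
    · have hvs : v ∉ Ustar := fun hs => by have := (hdeg v hs).1; omega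
      have hi1 : outDeg (M i) v = 1 := hMout1 i v hi hvs h0
      have e0 : outDeg (M 0) v + outDeg (M 1) v + outDeg (M 2) v = 1 := by
        fin_cases i
        · have ha : outDeg (M 0) v = 1 := hi1
          have hb : outDeg (M 1) v = 0 := hothers 1 (by decide)
          have hc : outDeg (M 2) v = 0 := hothers 2 (by decide)
          omega
        · have ha : outDeg (M 1) v = 1 := hi1
          have hb : outDeg (M 0) v = 0 := hothers 0 (by decide)
          have hc : outDeg (M 2) v = 0 := hothers 2 (by decide)
          omega
        · have ha : outDeg (M 2) v = 1 := hi1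
          have hb : outDeg (M 0) v = 0 := hothers 0 (by decide)
          have hc : outDeg (M 1) v = 0 := hothers 1 (by decide)
          omega
      omega
    · have h1 : outDeg F v = 1 := by have := hF.1 v; omega
      have m0 : outDeg (M 0) v = 0 := hMout0 0 v (fun h => h0 h.2.2)
      have m1 : outDeg (M 1) v = 0 := hMout0 1 v (fun h => h0 h.2.2)
      have m2 : outDeg (M 2) v = 0 := hMout0 2 v (fun h => h0 h.2.2)
      omega
  have hinN0 : ∀ v, v ∉ U 0 → inDeg (F ∪ M 0 ∪ M 1 ∪ M 2) v = 1 := by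
    intro v hv
    have hcase : ∃ i : Fin 3, v ∈ U i.succ := by
      rcases hmem v with h | h | h | h
      · exact absurd h hv
      · exact ⟨0, h⟩
      · exact ⟨1, h⟩
      · exact ⟨2, h⟩
    obtain ⟨i, hi⟩ := hcase
    have hothers : ∀ j : Fin 3, j ≠ i → inDeg (M j) v = 0 := by
      intro j hj
      exact hMin0 j v (fun h => hnm i.succ j.succ
        (fun hc => hj (Fin.succ_injective 3 hc).symm) v hi h.1)
    rw [hin v]
    by_cases h0 : inDeg F v = 0
    · have hvs : v ∉ Ustar := fun hs => by have := (hdeg v hs).2; omega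
      have hi1 : inDeg (M i) v = 1 := hMin1 i v hi hvs h0
      have e0 : inDeg (M 0) v + inDeg (M 1) v + inDeg (M 2) v = 1 := by
        fin_cases i
        · have ha : inDeg (M 0) v = 1 := hi1
          have hb : inDeg (M 1) v = 0 := hothers 1 (by decide)
          have hc : inDeg (M 2) v = 0 := hothers 2 (by decide)
          omega
        · have ha : inDeg (M 1) v = 1 := hi1
          have hb : inDeg (M 0) v = 0 := hothers 0 (by decide)
          have hc : inDeg (M 2) v = 0 := hothers 2 (by decide)
          omega
        · have ha : inDeg (M 2) v = 1 := hi1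
          have hb : inDeg (M 0) v = 0 := hothers 0 (by decide)
          have hc : inDeg (M 1) v = 0 := hothers 1 (by decide)
          omega
      omega
    · have h1 : inDeg F v = 1 := by have := hF.2.1 v; omega
      have m0 : inDeg (M 0) v = 0 := hMin0 0 v (fun h => h0 h.2.2)
      have m1 : inDeg (M 1) v = 0 := hMin0 1 v (fun h => h0 h.2.2)
      have m2 : inDeg (M 2) v = 0 := hMin0 2 v (fun h => h0 h.2.2)
      omega
  -- degree bounds
  have houtle : ∀ v, outDeg (F ∪ M 0 ∪ M 1 ∪ M 2) v ≤ 1 := by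
    intro v
    by_cases h : v ∈ U 3
    · rw [houtU3 v h]; exact hF.1 v
    · rw [houtN3 v h]
  have hinle : ∀ v, inDeg (F ∪ M 0 ∪ M 1 ∪ M 2) v ≤ 1 := by
    intro v
    by_cases h : v ∈ U 0
    · rw [hinU0 v h]; exact hF.2.1 v
    · rw [hinN0 v h]
  -- no cycle
  have hnocyc : ¬ HasCycle (F ∪ M 0 ∪ M 1 ∪ M 2) := by
    rintro ⟨v, l, hnd, hch, hcl⟩
    set cl := v :: l with hcl_def
    -- cycle edge predicate
    set CE : V × V → Prop := fun e =>
      (∃ i : ℕ, ∃ h : i + 1 < cl.length,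
        e = (cl.get ⟨i, by omega⟩, cl.get ⟨i + 1, h⟩)) ∨
      e = (cl.getLast (List.cons_ne_nil v l), v) with hCE_def
    have hCEmem : ∀ e, CE e → e ∈ F ∪ M 0 ∪ M 1 ∪ M 2 := by
      rintro e (⟨i, h, rfl⟩ | rfl)
      · exact List.isChain_iff_getElem.mp hch i (by omega)
      · exact hcl
    have hCEsnd : ∀ e, CE e → e.2 ∈ cl := by
      rintro e (⟨i, h, rfl⟩ | rfl)
      · exact List.get_mem cl _
      · exact List.mem_cons_self
    have hOutEdge : ∀ x ∈ cl, ∃ e, CE e ∧ e.1 = x := by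
      intro x hx
      obtain ⟨⟨k, hk⟩, rfl⟩ := List.mem_iff_get.mp hx
      by_cases h : k + 1 < cl.length
      · exact ⟨_, Or.inl ⟨k, h, rfl⟩, rfl⟩
      · have hk1 : k = cl.length - 1 := by omega
        refine ⟨_, Or.inr rfl, ?_⟩
        show cl.getLast _ = cl.get ⟨k, hk⟩
        rw [List.getLast_eq_getElem, List.get_eq_getElem]
        congr 1
        exact hk1.symm
    -- every cycle edge avoids M 2
    have hno2 : ∀ e, CE e → e ∉ M 2 := by
      intro e hce hm
      obtain ⟨hU3, hUs, hin0⟩ := hSm 2 e hm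
      have hU3' : e.2 ∈ U 3 := hU3
      have hout0 : outDeg F e.2 = 0 := hiso_in e.2 hin0 (hnm 3 0 (by decide) e.2 hU3')
      obtain ⟨e', hce', he'⟩ := hOutEdge e.2 (hCEsnd e hce)
      have : outDeg (F ∪ M 0 ∪ M 1 ∪ M 2) e.2 ≠ 0 := he' ▸ myOutDeg_ne_zero (hCEmem e' hce')
      rw [houtU3 e.2 hU3', hout0] at this
      exact this rfl
    -- every cycle edge avoids M 1
    have hno1 : ∀ e, CE e → e ∉ M 1 := by
      intro e hce hm
      obtain ⟨hU2, hUs, hin0⟩ := hSm 1 e hm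
      have hU2' : e.2 ∈ U 2 := hU2
      have hout0 : outDeg F e.2 = 0 := hiso_in e.2 hin0 (hnm 2 0 (by decide) e.2 hU2')
      obtain ⟨e', hce', he'⟩ := hOutEdge e.2 (hCEsnd e hce)
      have hmem' := hCEmem e' hce'
      simp only [Finset.mem_union] at hmem'
      rcases hmem' with ((hF' | h0) | h1) | h2
      · exact (he' ▸ myOutDeg_ne_zero hF' : outDeg F e.2 ≠ 0) hout0
      · have := (hSp 0 e' h0).1
        exact hnm 2 0 (by decide) e.2 hU2' (he' ▸ this)
      · have := (hSp 1 e' h1).1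
        exact hnm 2 1 (by decide) e.2 hU2' (he' ▸ this)
      · exact hno2 e' hce' h2
    -- every cycle edge avoids M 0
    have hno0 : ∀ e, CE e → e ∉ M 0 := by
      intro e hce hm
      obtain ⟨hU1, hUs, hin0⟩ := hSm 0 e hm
      have hU1' : e.2 ∈ U 1 := hU1
      have hout0 : outDeg F e.2 = 0 := hiso_in e.2 hin0 (hnm 1 0 (by decide) e.2 hU1')
      obtain ⟨e', hce', he'⟩ := hOutEdge e.2 (hCEsnd e hce)
      have hmem' := hCEmem e' hce'
      simp only [Finset.mem_union] at hmem'
      rcases hmem' with ((hF' | h0) | h1) | h2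
      · exact (he' ▸ myOutDeg_ne_zero hF' : outDeg F e.2 ≠ 0) hout0
      · have := (hSp 0 e' h0).1
        exact hnm 1 0 (by decide) e.2 hU1' (he' ▸ this)
      · exact hno1 e' hce' h1
      · have := (hSp 2 e' h2).1
        exact hnm 1 2 (by decide) e.2 hU1' (he' ▸ this)
    have hCEF : ∀ e, CE e → e ∈ F := by
      intro e hce
      have hmem' := hCEmem e hce
      simp only [Finset.mem_union] at hmem'
      rcases hmem' with ((hF' | h0) | h1) | h2
      · exact hF'
      · exact absurd h0 (hno0 e hce)
      · exact absurd h1 (hno1 e hce)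
      · exact absurd h2 (hno2 e hce)
    exact hF.2.2 ⟨v, l, hnd,
      List.isChain_iff_getElem.mpr (fun i h => hCEF _ (Or.inl ⟨i, by simp only [hcl_def]; omega, rfl⟩)),
      hCEF _ (Or.inr rfl)⟩
  refine ⟨⟨houtle, hinle, hnocyc⟩, ?_, ?_, ?_, ?_⟩
  · -- verts = univ
    apply Finset.eq_univ_of_forall
    intro v
    by_cases h : v ∈ U 3
    · have h0 : v ∉ U 0 := hnm 3 0 (by decide) v h
      exact myMem_verts_of_in (by rw [hinN0 v h0]; omega)
    · exact myMem_verts_of_out (by rw [houtN3 v h]; omega)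
  · -- startSet
    intro v hv
    simp only [startSet, Finset.mem_filter, Finset.mem_univ, true_and] at hv
    obtain ⟨ho, hi⟩ := hv
    have hv0 : v ∈ U 0 := by
      by_contra h
      rw [hinN0 v h] at hi
      omega
    have hiF : inDeg F v = 0 := by rw [hinU0 v hv0] at hi; exact hi
    rw [Finset.mem_sdiff]
    refine ⟨hv0, fun hs => ?_⟩
    have := (hdeg v hs).2
    omega
  · -- endSet
    intro v hv
    simp only [endSet, Finset.mem_filter, Finset.mem_univ, true_and] at hv
    obtain ⟨hi, ho⟩ := hv
    have hv3 : v ∈ U 3 := by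
      by_contra h
      rw [houtN3 v h] at ho
      omega
    have hoF : outDeg F v = 0 := by rw [houtU3 v hv3] at ho; exact ho
    rw [Finset.mem_sdiff]
    refine ⟨hv3, fun hs => ?_⟩
    have := (hdeg v hs).1
    omega
  · -- interior
    intro v hv hv03
    simp only [interiorSet, Finset.mem_filter, Finset.mem_univ, true_and] at hv
    obtain ⟨ho, hi⟩ := hv
    rw [Finset.mem_sdiff, Finset.mem_union] at hv03
    rcases hv03.1 with h | h
    · have : inDeg F v = 1 := by rw [hinU0 v h] at hi; exact hi
      exact myMem_verts_of_in (by omega)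
    · have : outDeg F v = 1 := by rw [houtU3 v h] at ho; exact ho
      exact myMem_verts_of_out (by omega)
end

section
/- Let A and B be disjoint finite sets with |A| = |B|. Let F be a linear forest with V(F) = A ∪ B, V⁺(F) ⊆ B and V⁻(F) ⊆ A (so every component of F is a directed path which starts in B and ends in A). Then there exists a linear forest F' with V(F') = A ∪ B such that every edge of F' joins a vertex of A and a vertex of B, and there is a bijection between the components of F and the components of F' under which corresponding paths have the same starting point and the same ending point. In particular, V⁺(F') = V⁺(F), V⁻(F') = V⁻(F) and V⁰(F') = V⁰(F). -/
open Finset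

variable {V : Type}

-- ## Auxiliary machinery


section ZipLemmas
variable {α : Type*}

lemma chain'_cons_iff {r : α → α → Prop} {a b : α} {l : List α} :
    (a :: b :: l).Chain' r ↔ r a b ∧ (b :: l).Chain' r := List.isChain_cons_cons

lemma chain'_reverse_iff {r : α → α → Prop} {l : List α} :
    l.reverse.Chain' r ↔ l.Chain' (flip r) := List.isChain_reverse

lemma chain'_append_iff {r : α → α → Prop} {l₁ l₂ : List α} :
    (l₁ ++ l₂).Chain' r ↔ l₁.Chain' r ∧ l₂.Chain' r ∧
      ∀ x ∈ l₁.getLast?, ∀ y ∈ l₂.head?, r x y := List.isChain_append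

lemma zt_mem : ∀ {l : List α} {a b : α}, (a, b) ∈ l.zip l.tail →
    a ∈ l.dropLast ∧ b ∈ l.tail := by
  intro l
  induction l with
  | nil => simp
  | cons x xs ih =>
    intro a b h
    cases xs with
    | nil => simp at h
    | cons y ys =>
      simp only [List.tail_cons, List.zip_cons_cons, List.mem_cons, Prod.mk.injEq] at h
      rcases h with ⟨rfl, rfl⟩ | h
      · exact ⟨by rw [List.dropLast_cons₂]; simp, by simp⟩
      · have := ih (show (a, b) ∈ (y :: ys).zip (y :: ys).tail by simpa using h)
        exact ⟨by rw [List.dropLast_cons₂]; exact List.mem_cons_of_mem _ this.1,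
          List.mem_cons_of_mem _ this.2⟩

lemma zt_of_dropLast : ∀ {l : List α} {a : α}, a ∈ l.dropLast →
    ∃ b, (a, b) ∈ l.zip l.tail := by
  intro l
  induction l with
  | nil => simp
  | cons x xs ih =>
    intro a h
    cases xs with
    | nil => simp at h
    | cons y ys =>
      rw [List.dropLast_cons₂] at h
      rcases List.mem_cons.1 h with rfl | h
      · exact ⟨y, by simp⟩
      · obtain ⟨b, hb⟩ := ih h
        refine ⟨b, ?_⟩
        simp only [List.tail_cons, List.zip_cons_cons, List.mem_cons]
        right
        simpa using hb

lemma zt_of_tail : ∀ {l : List α} {b : α}, b ∈ l.tail →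
    ∃ a, (a, b) ∈ l.zip l.tail := by
  intro l
  induction l with
  | nil => simp
  | cons x xs ih =>
    intro b h
    cases xs with
    | nil => simp at h
    | cons y ys =>
      simp only [List.tail_cons] at h
      rcases List.mem_cons.1 h with rfl | h
      · exact ⟨x, by simp⟩
      · obtain ⟨a, ha⟩ := ih (by simpa using h)
        refine ⟨a, ?_⟩
        simp only [List.tail_cons, List.zip_cons_cons, List.mem_cons]
        right
        simpa using ha

lemma chain'_iff_zt {r : α → α → Prop} : ∀ {l : List α},
    l.Chain' r ↔ ∀ p ∈ l.zip l.tail, r p.1 p.2 := by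
  intro l
  induction l with
  | nil => simp [List.Chain']
  | cons x xs ih =>
    cases xs with
    | nil => simp [List.Chain']
    | cons y ys =>
      rw [chain'_cons_iff, ih]
      constructor
      · rintro ⟨h1, h2⟩ p hp
        simp only [List.tail_cons, List.zip_cons_cons, List.mem_cons] at hp
        rcases hp with rfl | hp
        · exact h1
        · exact h2 p hp
      · intro h
        refine ⟨h (x, y) (by simp), fun p hp => h p ?_⟩
        simp only [List.tail_cons, List.zip_cons_cons, List.mem_cons]
        right; exact hp

lemma zt_func : ∀ {l : List α}, l.Nodup → ∀ {a b c : α},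
    (a, b) ∈ l.zip l.tail → (a, c) ∈ l.zip l.tail → b = c := by
  intro l
  induction l with
  | nil => simp
  | cons x xs ih =>
    intro hnd a b c hb hc
    cases xs with
    | nil => simp at hb
    | cons y ys =>
      simp only [List.tail_cons, List.zip_cons_cons, List.mem_cons, Prod.mk.injEq] at hb hc
      have hxnot : x ∉ y :: ys := (List.nodup_cons.1 hnd).1
      rcases hb with ⟨hb1, hb2⟩ | hb <;> rcases hc with ⟨hc1, hc2⟩ | hc
      · rw [hb2, hc2]
      · exact absurd (List.dropLast_subset _ (zt_mem
          (show (a, c) ∈ (y :: ys).zip (y :: ys).tail by simpa using hc)).1)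
          (hb1.symm ▸ hxnot)
      · exact absurd (List.dropLast_subset _ (zt_mem
          (show (a, b) ∈ (y :: ys).zip (y :: ys).tail by simpa using hb)).1)
          (hc1.symm ▸ hxnot)
      · exact ih (List.nodup_cons.1 hnd).2
          (show (a, b) ∈ (y :: ys).zip (y :: ys).tail by simpa using hb)
          (show (a, c) ∈ (y :: ys).zip (y :: ys).tail by simpa using hc)

lemma zt_cofunc : ∀ {l : List α}, l.Nodup → ∀ {a b c : α},
    (a, c) ∈ l.zip l.tail → (b, c) ∈ l.zip l.tail → a = b := by
  intro l
  induction l with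
  | nil => simp
  | cons x xs ih =>
    intro hnd a b c ha hb
    cases xs with
    | nil => simp at ha
    | cons y ys =>
      simp only [List.tail_cons, List.zip_cons_cons, List.mem_cons, Prod.mk.injEq] at ha hb
      have hynd : (y :: ys).Nodup := (List.nodup_cons.1 hnd).2
      have hynot : y ∉ ys := (List.nodup_cons.1 hynd).1
      rcases ha with ⟨ha1, ha2⟩ | ha <;> rcases hb with ⟨hb1, hb2⟩ | hb
      · rw [ha1, hb1]
      · exact absurd (zt_mem (show (b, c) ∈ (y :: ys).zip (y :: ys).tail by
          simpa using hb)).2 (show c ∉ (y :: ys).tail by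
            simp only [List.tail_cons]; exact ha2.symm ▸ hynot)
      · exact absurd (zt_mem (show (a, c) ∈ (y :: ys).zip (y :: ys).tail by
          simpa using ha)).2 (show c ∉ (y :: ys).tail by
            simp only [List.tail_cons]; exact hb2.symm ▸ hynot)
      · exact ih hynd
          (show (a, c) ∈ (y :: ys).zip (y :: ys).tail by simpa using ha)
          (show (b, c) ∈ (y :: ys).zip (y :: ys).tail by simpa using hb)

lemma zt_cons {x : α} {l : List α} {a b : α} (h : (a, b) ∈ l.zip l.tail) :
    (a, b) ∈ (x :: l).zip (x :: l).tail := by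
  cases l with
  | nil => simp at h
  | cons y ys =>
    simp only [List.tail_cons, List.zip_cons_cons, List.mem_cons]
    right
    simpa using h

lemma zt_prefix : ∀ (pre : List α) {l : List α} {a b : α},
    (a, b) ∈ l.zip l.tail → (a, b) ∈ (pre ++ l).zip (pre ++ l).tail := by
  intro pre
  induction pre with
  | nil => intro l a b h; simpa using h
  | cons x xs ih => intro l a b h; exact zt_cons (ih h)

lemma zt_suffix : ∀ {l : List α} (suf : List α) {a b : α},
    (a, b) ∈ l.zip l.tail → (a, b) ∈ (l ++ suf).zip (l ++ suf).tail := by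
  intro l
  induction l with
  | nil => simp
  | cons x xs ih =>
    intro suf a b h
    cases xs with
    | nil => simp at h
    | cons y ys =>
      simp only [List.tail_cons, List.zip_cons_cons, List.mem_cons, Prod.mk.injEq] at h
      rcases h with ⟨h1, h2⟩ | h
      · subst h1; subst h2
        simp [List.cons_append, List.zip_cons_cons]
      · have := ih suf (show (a, b) ∈ (y :: ys).zip (y :: ys).tail by simpa using h)
        simp only [List.cons_append, List.tail_cons, List.zip_cons_cons, List.mem_cons]
        right
        simpa using this

lemma zt_infix (pre suf : List α) {l : List α} {a b : α}
    (h : (a, b) ∈ l.zip l.tail) :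
    (a, b) ∈ (pre ++ l ++ suf).zip (pre ++ l ++ suf).tail := by
  rw [List.append_assoc]
  exact zt_prefix pre (zt_suffix suf h)

lemma flatten_decomp : ∀ {blocks : List (List α)} {b : List α}, b ∈ blocks →
    ∃ pre suf, blocks.flatten = pre ++ b ++ suf := by
  intro blocks
  induction blocks with
  | nil => simp
  | cons c cs ih =>
    intro b hb
    rcases List.mem_cons.1 hb with rfl | hb
    · exact ⟨[], cs.flatten, by simp⟩
    · obtain ⟨pre, suf, hps⟩ := ih hb
      exact ⟨c ++ pre, suf, by simp [hps]⟩

lemma zt_idx [DecidableEq α] : ∀ {l : List α}, l.Nodup → ∀ {a b : α},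
    (a, b) ∈ l.zip l.tail → l.idxOf a < l.idxOf b := by
  intro l
  induction l with
  | nil => simp
  | cons x xs ih =>
    intro hnd a b h
    cases xs with
    | nil => simp at h
    | cons y ys =>
      simp only [List.tail_cons, List.zip_cons_cons, List.mem_cons, Prod.mk.injEq] at h
      have hxnot : x ∉ y :: ys := (List.nodup_cons.1 hnd).1
      rcases h with ⟨h1, h2⟩ | h
      · have hxy : x ≠ y := by rintro rfl; exact hxnot (by simp)
        rw [h1, h2, List.idxOf_cons_self, List.idxOf_cons_ne _ hxy]
        exact Nat.succ_pos _
      · have h' : (a, b) ∈ (y :: ys).zip (y :: ys).tail := by simpa using h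
        have hm := zt_mem h'
        have ha : a ∈ y :: ys := List.dropLast_subset _ hm.1
        have hb : b ∈ y :: ys := List.mem_of_mem_tail hm.2
        have hax : x ≠ a := by rintro rfl; exact hxnot ha
        have hbx : x ≠ b := by rintro rfl; exact hxnot hb
        rw [List.idxOf_cons_ne _ hax, List.idxOf_cons_ne _ hbx]
        exact Nat.succ_lt_succ (ih (List.nodup_cons.1 hnd).2 h')

lemma chain'_le {r : α → α → Prop} {f : α → ℕ} (hf : ∀ a b, r a b → f a < f b) :
    ∀ {l : List α} {x y : α}, l.Chain' r → l.head? = some x → l.getLast? = some y →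
      f x ≤ f y := by
  intro l
  induction l with
  | nil => simp
  | cons a as ih =>
    intro x y hc hh hl
    simp only [List.head?_cons, Option.some.injEq] at hh
    cases as with
    | nil =>
      simp only [List.getLast?_singleton, Option.some.injEq] at hl
      rw [← hh, ← hl]
    | cons b bs =>
      rw [chain'_cons_iff] at hc
      have h1 : f a < f b := hf _ _ hc.1
      have h2 : f b ≤ f y := ih hc.2 rfl (by rw [← hl, List.getLast?_cons_cons])
      rw [← hh]
      omega

lemma mem_dropLast_or_tail : ∀ {l : List α}, 2 ≤ l.length → ∀ {v : α}, v ∈ l →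
    v ∈ l.dropLast ∨ v ∈ l.tail := by
  intro l
  cases l with
  | nil => simp
  | cons x xs =>
    cases xs with
    | nil => simp
    | cons y ys =>
      intro _ v hv
      rcases List.mem_cons.1 hv with rfl | hv
      · left; rw [List.dropLast_cons₂]; simp
      · right; simpa using hv

lemma head_mem_dropLast : ∀ {l : List α}, 2 ≤ l.length → ∀ {x : α},
    l.head? = some x → x ∈ l.dropLast := by
  intro l
  cases l with
  | nil => simp
  | cons a as =>
    cases as with
    | nil => simp
    | cons b bs =>
      intro _ x hx
      simp only [List.head?_cons, Option.some.injEq] at hx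
      subst hx
      rw [List.dropLast_cons₂]; simp

lemma last_mem_tail : ∀ {l : List α}, 2 ≤ l.length → ∀ {x : α},
    l.getLast? = some x → x ∈ l.tail := by
  intro l
  cases l with
  | nil => simp
  | cons a as =>
    cases as with
    | nil => simp
    | cons b bs =>
      intro _ x hx
      rw [List.getLast?_cons_cons,
        List.getLast?_eq_getLast (List.cons_ne_nil b bs)] at hx
      simp only [Option.some.injEq] at hx
      simp only [List.tail_cons]
      rw [← hx]
      exact List.getLast_mem _

lemma chain_unique {r : α → α → Prop} (hr : ∀ a b c, r a b → r a c → b = c) :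
    ∀ (l₁ l₂ : List α), l₁.Chain' r → l₂.Chain' r →
      l₁.head? = l₂.head? →
      (∀ x, l₁.getLast? = some x → ∀ w, ¬ r x w) →
      (∀ x, l₂.getLast? = some x → ∀ w, ¬ r x w) →
      l₁ = l₂ := by
  intro l₁
  induction l₁ with
  | nil =>
    intro l₂ _ _ hh _ _
    cases l₂ with
    | nil => rfl
    | cons b bs => simp at hh
  | cons a as ih =>
    intro l₂ hc₁ hc₂ hh ht₁ ht₂
    cases l₂ with
    | nil => simp at hh
    | cons b bs =>
      simp only [List.head?_cons, Option.some.injEq] at hh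
      subst hh
      cases as with
      | nil =>
        cases bs with
        | nil => rfl
        | cons c cs =>
          rw [chain'_cons_iff] at hc₂
          exact absurd hc₂.1 (ht₁ a (by simp) c)
      | cons c cs =>
        cases bs with
        | nil =>
          rw [chain'_cons_iff] at hc₁
          exact absurd hc₁.1 (ht₂ a (by simp) c)
        | cons d ds =>
          rw [chain'_cons_iff] at hc₁ hc₂
          have hcd : c = d := hr a c d hc₁.1 hc₂.1
          subst hcd
          have := ih (c :: ds) hc₁.2 hc₂.2 rfl
            (fun x hx w => ht₁ x (by rw [List.getLast?_cons_cons]; exact hx) w)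
            (fun x hx w => ht₂ x (by rw [List.getLast?_cons_cons]; exact hx) w)
          rw [this]

/-- Relational form of a cycle. -/
def RelCycle (r : α → α → Prop) : Prop :=
  ∃ (v : α) (l : List α) (x : α), (v :: l).Nodup ∧ (v :: l).Chain' r ∧
    (v :: l).getLast? = some x ∧ r x v

lemma relCycle_flip {r : α → α → Prop} (h : RelCycle (flip r)) : RelCycle r := by
  obtain ⟨v, l, x, hnd, hc, hl, hr⟩ := h
  have hne : (v :: l).reverse ≠ [] := by simp
  obtain ⟨w, m, hm⟩ := List.exists_cons_of_ne_nil hne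
  have hwx : w = x := by
    have h1 : (v :: l).reverse.head? = some x := by
      rw [List.head?_reverse, hl]
    rw [hm] at h1
    simpa using h1
  refine ⟨w, m, v, ?_, ?_, ?_, ?_⟩
  · rw [← hm]; exact List.nodup_reverse.mpr hnd
  · rw [← hm, chain'_reverse_iff]; exact hc
  · rw [← hm, List.getLast?_reverse]; simp
  · rw [hwx]; exact hr

lemma fresh_step {r : α → α → Prop}
    (hback : ∀ a b c, r a c → r b c → a = b)
    (hnc : ¬ RelCycle r) {pre : List α} {v w : α}
    (hnd : (pre ++ [v]).Nodup) (hc : (pre ++ [v]).Chain' r) (hw : r v w) :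
    w ∉ pre ++ [v] := by
  intro hwmem
  obtain ⟨h0, rest, hrest⟩ : ∃ h0 rest, pre ++ [v] = h0 :: rest := by
    cases hp : pre ++ [v] with
    | nil => exact absurd hp (by simp)
    | cons a as => exact ⟨a, as, rfl⟩
  by_cases hwh : w = h0
  · refine hnc ⟨h0, rest, v, ?_, ?_, ?_, ?_⟩
    · rw [← hrest]; exact hnd
    · rw [← hrest]; exact hc
    · rw [← hrest, List.getLast?_concat]
    · rw [← hwh]; exact hw
  · have hwtail : w ∈ (pre ++ [v]).tail := by
      rw [hrest] at hwmem ⊢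
      rcases List.mem_cons.1 hwmem with rfl | hmem
      · exact absurd rfl hwh
      · simpa using hmem
    obtain ⟨p, hp⟩ := zt_of_tail hwtail
    have hpr : r p w := (chain'_iff_zt.1 hc) _ hp
    have hpv : p = v := hback p v w hpr hw
    rw [hpv] at hp
    have hmem : v ∈ (pre ++ [v]).dropLast := (zt_mem hp).1
    rw [List.dropLast_concat] at hmem
    exact (List.disjoint_of_nodup_append hnd) hmem (by simp)

lemma traj_exists [Fintype α] {r : α → α → Prop}
    (hback : ∀ a b c, r a c → r b c → a = b)
    (hnc : ¬ RelCycle r) :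
    ∀ (n : ℕ) (pre : List α) (v : α),
      (pre ++ [v]).Nodup → (pre ++ [v]).Chain' r →
      Fintype.card α ≤ n + (pre.length + 1) →
      ∃ l : List α, l.head? = some v ∧ (pre ++ l).Nodup ∧ (pre ++ l).Chain' r ∧
        ∃ t, l.getLast? = some t ∧ ∀ w, ¬ r t w := by
  intro n
  induction n with
  | zero =>
    intro pre v hnd hc hcard
    by_cases h : ∃ w, r v w
    · exfalso
      obtain ⟨w, hw⟩ := h
      have hfresh := fresh_step hback hnc hnd hc hw
      have hnd' : ((pre ++ [v]) ++ [w]).Nodup := by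
        rw [List.nodup_append']
        exact ⟨hnd, List.nodup_singleton w, by
          intro a ha hb
          simp only [List.mem_singleton] at hb
          subst hb
          exact hfresh ha⟩
      have hlen := hnd'.length_le_card
      simp only [List.length_append, List.length_singleton] at hlen hcard
      omega
    · push_neg at h
      exact ⟨[v], rfl, hnd, hc, v, rfl, h⟩
  | succ m ih =>
    intro pre v hnd hc hcard
    by_cases h : ∃ w, r v w
    · obtain ⟨w, hw⟩ := h
      have hfresh := fresh_step hback hnc hnd hc hw
      have hnd' : ((pre ++ [v]) ++ [w]).Nodup := by
        rw [List.nodup_append']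
        exact ⟨hnd, List.nodup_singleton w, by
          intro a ha hb
          simp only [List.mem_singleton] at hb
          subst hb
          exact hfresh ha⟩
      have hc' : ((pre ++ [v]) ++ [w]).Chain' r := by
        rw [chain'_append_iff]
        refine ⟨hc, List.isChain_singleton w, ?_⟩
        intro x hx y hy
        rw [List.getLast?_concat] at hx
        simp only [List.head?_cons, Option.mem_def, Option.some.injEq] at hy
        simp only [Option.mem_def, Option.some.injEq] at hx
        rw [← hx, ← hy]
        exact hw
      have hcard' : Fintype.card α ≤ m + ((pre ++ [v]).length + 1) := by
        simp only [List.length_append, List.length_singleton]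
        omega
      obtain ⟨l, hl1, hl2, hl3, t, ht1, ht2⟩ := ih (pre ++ [v]) w hnd' hc' hcard'
      refine ⟨v :: l, rfl, ?_, ?_, t, ?_, ht2⟩
      · rw [show pre ++ v :: l = (pre ++ [v]) ++ l by simp]; exact hl2
      · rw [show pre ++ v :: l = (pre ++ [v]) ++ l by simp]; exact hl3
      · cases l with
        | nil => simp at hl1
        | cons a as => rw [List.getLast?_cons_cons]; exact ht1
    · push_neg at h
      exact ⟨[v], rfl, hnd, hc, v, rfl, h⟩

lemma flatMap_pair_perm {β : Type*} (f g : β → α) : ∀ l : List β,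
    (l.flatMap fun x => [f x, g x]).Perm (l.map f ++ l.map g) := by
  intro l
  induction l with
  | nil => simp
  | cons x xs ih =>
    simp only [List.flatMap_cons, List.map_cons, List.cons_append]
    refine ((ih.cons (g x)).cons (f x)).trans ?_
    exact (List.perm_middle.symm).cons (f x)

end ZipLemmas

section DegreeLemmas
variable [DecidableEq V] {F : Finset (V × V)} {v : V}

lemma outDeg_le_one_iff :
    outDeg F v ≤ 1 ↔ ∀ w w', (v, w) ∈ F → (v, w') ∈ F → w = w' := by
  unfold outDeg
  rw [Finset.card_le_one]
  constructor
  · intro h w w' hw hw'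
    have := h (v, w) (Finset.mem_filter.2 ⟨hw, rfl⟩) (v, w') (Finset.mem_filter.2 ⟨hw', rfl⟩)
    exact congrArg Prod.snd this
  · intro h a ha b hb
    obtain ⟨ha1, ha2⟩ := Finset.mem_filter.1 ha
    obtain ⟨hb1, hb2⟩ := Finset.mem_filter.1 hb
    have ha' : a = (v, a.2) := by rw [← ha2]
    have hb' : b = (v, b.2) := by rw [← hb2]
    rw [ha', hb', h a.2 b.2 (ha' ▸ ha1) (hb' ▸ hb1)]

lemma inDeg_le_one_iff :
    inDeg F v ≤ 1 ↔ ∀ u u', (u, v) ∈ F → (u', v) ∈ F → u = u' := by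
  unfold inDeg
  rw [Finset.card_le_one]
  constructor
  · intro h u u' hu hu'
    have := h (u, v) (Finset.mem_filter.2 ⟨hu, rfl⟩) (u', v) (Finset.mem_filter.2 ⟨hu', rfl⟩)
    exact congrArg Prod.fst this
  · intro h a ha b hb
    obtain ⟨ha1, ha2⟩ := Finset.mem_filter.1 ha
    obtain ⟨hb1, hb2⟩ := Finset.mem_filter.1 hb
    have ha' : a = (a.1, v) := by rw [← ha2]
    have hb' : b = (b.1, v) := by rw [← hb2]
    rw [ha', hb', h a.1 b.1 (ha' ▸ ha1) (hb' ▸ hb1)]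

lemma outDeg_eq_zero_iff : outDeg F v = 0 ↔ ∀ w, (v, w) ∉ F := by
  unfold outDeg
  rw [Finset.card_eq_zero, Finset.filter_eq_empty_iff]
  constructor
  · intro h w hw
    exact h hw rfl
  · intro h e he hev
    have : e = (v, e.2) := by rw [← hev]
    exact h e.2 (this ▸ he)

lemma inDeg_eq_zero_iff : inDeg F v = 0 ↔ ∀ u, (u, v) ∉ F := by
  unfold inDeg
  rw [Finset.card_eq_zero, Finset.filter_eq_empty_iff]
  constructor
  · intro h u hu
    exact h hu rfl
  · intro h e he hev
    have : e = (e.1, v) := by rw [← hev]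
    exact h e.1 (this ▸ he)

lemma one_le_outDeg_iff : 1 ≤ outDeg F v ↔ ∃ w, (v, w) ∈ F := by
  rw [← not_iff_not]
  push_neg
  rw [Nat.lt_one_iff, outDeg_eq_zero_iff]

lemma one_le_inDeg_iff : 1 ≤ inDeg F v ↔ ∃ u, (u, v) ∈ F := by
  rw [← not_iff_not]
  push_neg
  rw [Nat.lt_one_iff, inDeg_eq_zero_iff]

lemma mem_verts_iff : v ∈ verts F ↔ (∃ w, (v, w) ∈ F) ∨ (∃ u, (u, v) ∈ F) := by
  unfold verts
  simp only [Finset.mem_union, Finset.mem_image]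
  constructor
  · rintro (⟨e, he, rfl⟩ | ⟨e, he, rfl⟩)
    · exact Or.inl ⟨e.2, he⟩
    · exact Or.inr ⟨e.1, he⟩
  · rintro (⟨w, hw⟩ | ⟨u, hu⟩)
    · exact Or.inl ⟨(v, w), hw, rfl⟩
    · exact Or.inr ⟨(u, v), hu, rfl⟩

lemma hasCycle_iff_relCycle : HasCycle F ↔ RelCycle (fun a b => (a, b) ∈ F) := by
  constructor
  · rintro ⟨v, l, hnd, hc, he⟩
    exact ⟨v, l, (v :: l).getLast (List.cons_ne_nil v l), hnd, hc,
      List.getLast?_eq_getLast _, he⟩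
  · rintro ⟨v, l, x, hnd, hc, hl, he⟩
    refine ⟨v, l, hnd, hc, ?_⟩
    rw [List.getLast?_eq_getLast (List.cons_ne_nil v l)] at hl
    simp only [Option.some.injEq] at hl
    rw [hl]
    exact he

end DegreeLemmas



section MoreAux
variable {α : Type*}

lemma nodup_infix {pre b suf : List α} (h : (pre ++ b ++ suf).Nodup) : b.Nodup :=
  ((List.nodup_append.1 (List.nodup_append.1 h).1).2).1

lemma alt_chain [DecidableEq V] [Fintype V] {A B : Finset V} {t : V} (ht : t ∈ A) :
    ∀ (Zl : List (V × V)), (∀ p ∈ Zl, p.1 ∈ A ∧ p.2 ∈ B) → ∀ x ∈ B,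
      (x :: ((Zl.flatMap fun p => [p.1, p.2]) ++ [t])).Chain'
        (fun a b => (a ∈ A ∧ b ∈ B) ∨ (a ∈ B ∧ b ∈ A)) := by
  intro Zl
  induction Zl with
  | nil =>
    intro _ x hx
    simp only [List.flatMap_nil, List.nil_append]
    exact chain'_cons_iff.2 ⟨Or.inr ⟨hx, ht⟩, List.isChain_singleton t⟩
  | cons p ps ih =>
    intro hmem x hx
    have hp := hmem p (List.mem_cons_self)
    simp only [List.flatMap_cons, List.cons_append, List.append_assoc]
    refine chain'_cons_iff.2 ⟨Or.inr ⟨hx, hp.1⟩, chain'_cons_iff.2 ⟨Or.inl hp, ?_⟩⟩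
    have := ih (fun q hq => hmem q (List.mem_cons_of_mem p hq)) p.2 hp.2
    simpa using this

lemma verts_eq_tri [Fintype V] [DecidableEq V] {G : Finset (V × V)}
    (hout : ∀ v, outDeg G v ≤ 1) (hin : ∀ v, inDeg G v ≤ 1) :
    verts G = startSet G ∪ endSet G ∪ interiorSet G := by
  ext v
  simp only [mem_verts_iff, startSet, endSet, interiorSet, Finset.mem_union,
    Finset.mem_filter, Finset.mem_univ, true_and]
  rw [← one_le_outDeg_iff, ← one_le_inDeg_iff]
  have h1 := hout v
  have h2 := hin v
  omega

end MoreAux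

/-- Every spanning linear forest on `A ∪ B` (with `|A| = |B|`) whose
paths start in `B` and end in `A` is equivalent to a bipartite linear forest on the
vertex classes `A` and `B`: there is a linear forest `F'` with the same vertex set,
all of whose edges join `A` and `B`, whose components are in bijection with those of
`F` with the same starting and ending points. -/
theorem equivalent_bipartite_linear_forest {V : Type} [Fintype V] [DecidableEq V]
    (A B : Finset V)
    (hAB : Disjoint A B)
    (hcard : A.card = B.card)
    (F : Finset (V × V))
    (hF : IsLinearForest F)
    (hVF : verts F = A ∪ B)
    (hstart : startSet F ⊆ B)
    (hend : endSet F ⊆ A) :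
    ∃ F' : Finset (V × V),
      IsLinearForest F' ∧
      verts F' = A ∪ B ∧
      (∀ e ∈ F', (e.1 ∈ A ∧ e.2 ∈ B) ∨ (e.1 ∈ B ∧ e.2 ∈ A)) ∧
      -- components correspond: for all `s, t`, `F` has a component (maximal path)
      -- from `s` to `t` if and only if `F'` does
      (∀ s t : V,
        (s ∈ startSet F ∧ t ∈ endSet F ∧
          ∃ l : List V, IsPathList F l ∧ l.head? = some s ∧ l.getLast? = some t) ↔
        (s ∈ startSet F' ∧ t ∈ endSet F' ∧
          ∃ l : List V, IsPathList F' l ∧ l.head? = some s ∧ l.getLast? = some t)) ∧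
      startSet F' = startSet F ∧
      endSet F' = endSet F ∧
      interiorSet F' = interiorSet F := by
  classical
  obtain ⟨hout, hin, hnc⟩ := hF
  set r : V → V → Prop := fun a b => (a, b) ∈ F with hr
  have houtf : ∀ a b c, r a b → r a c → b = c :=
    fun a b c => (outDeg_le_one_iff.1 (hout a)) b c
  have hinf : ∀ a b c, r a c → r b c → a = b :=
    fun a b c => (inDeg_le_one_iff.1 (hin c)) a b
  have hncR : ¬ RelCycle r := fun h => hnc (hasCycle_iff_relCycle.2 h)
  have hncR' : ¬ RelCycle (flip r) := fun h => hncR (relCycle_flip h)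
  -- forward trajectories
  have htraj : ∀ v : V, ∃ (l : List V) (t : V), l.head? = some v ∧ l.Nodup ∧
      l.Chain' r ∧ l.getLast? = some t ∧ ∀ w, ¬ r t w := by
    intro v
    obtain ⟨l, h1, h2, h3, t, h4, h5⟩ := traj_exists hinf hncR (Fintype.card V) [] v
      (by simp) (by simp [List.Chain']) (by simp)
    exact ⟨l, t, h1, by simpa using h2, by simpa using h3, h4, h5⟩
  choose P φ hP1 hP2 hP3 hP4 hP5 using htraj
  -- uniqueness of maximal chains from a given head
  have huniq : ∀ (l₁ l₂ : List V), l₁.Chain' r → l₂.Chain' r → l₁.head? = l₂.head? →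
      (∀ x, l₁.getLast? = some x → outDeg F x = 0) →
      (∀ x, l₂.getLast? = some x → outDeg F x = 0) → l₁ = l₂ := by
    intro l₁ l₂ hc₁ hc₂ hh h₁ h₂
    refine chain_unique houtf l₁ l₂ hc₁ hc₂ hh ?_ ?_
    · intro x hx w
      exact outDeg_eq_zero_iff.1 (h₁ x hx) w
    · intro x hx w
      exact outDeg_eq_zero_iff.1 (h₂ x hx) w
  have hPout0 : ∀ v, outDeg F (φ v) = 0 := fun v => outDeg_eq_zero_iff.2 (hP5 v)
  -- every chain from s ending at an out-degree-0 vertex is P s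
  have huniqP : ∀ (s : V) (l : List V), l.Chain' r → l.head? = some s →
      (∀ x, l.getLast? = some x → outDeg F x = 0) → l = P s := by
    intro s l hc hh hterm
    exact huniq l (P s) hc (hP3 s) (by rw [hh, hP1 s])
      hterm (fun x hx => by rw [hP4 s] at hx; cases hx; exact hPout0 s)
  have hlen2 : ∀ s, outDeg F s = 1 → 2 ≤ (P s).length := by
    intro s hs
    obtain ⟨w, hw⟩ := (one_le_outDeg_iff (F := F) (v := s)).1 (by omega)
    cases hPs : P s with
    | nil =>
      have h1 := hP1 s
      rw [hPs] at h1
      simp at h1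
    | cons a as =>
      cases as with
      | nil =>
        exfalso
        have h1 := hP1 s
        have h4 := hP4 s
        rw [hPs] at h1 h4
        simp only [List.head?_cons, Option.some.injEq] at h1
        simp only [List.getLast?_singleton, Option.some.injEq] at h4
        apply hP5 s w
        rw [← h4, h1]
        exact hw
      | cons b bs => simp
  have hφend : ∀ s, s ∈ startSet F → φ s ∈ endSet F := by
    intro s hs
    have hs1 : outDeg F s = 1 := (Finset.mem_filter.1 hs).2.1
    have hl2 := hlen2 s hs1
    have hmem : φ s ∈ (P s).tail := last_mem_tail hl2 (hP4 s)
    obtain ⟨p, hp⟩ := zt_of_tail hmem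
    have hrp : r p (φ s) := (chain'_iff_zt.1 (hP3 s)) _ hp
    have hin1 : 1 ≤ inDeg F (φ s) := one_le_inDeg_iff.2 ⟨p, hrp⟩
    have := hin (φ s)
    simp only [endSet, Finset.mem_filter, Finset.mem_univ, true_and]
    exact ⟨by omega, hPout0 s⟩
  -- injectivity of φ on startSet
  have hinj : ∀ s₁, s₁ ∈ startSet F → ∀ s₂, s₂ ∈ startSet F → φ s₁ = φ s₂ → s₁ = s₂ := by
    intro s₁ hs₁ s₂ hs₂ hφeq
    have key : ∀ s, s ∈ startSet F → ∀ (l : List V), l.Chain' (flip r) →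
        l.head? = some (φ s) → True := fun _ _ _ _ _ => trivial
    have hrev : (P s₁).reverse = (P s₂).reverse := by
      refine chain_unique (r := flip r) (fun a b c hab hac => hinf b c a hab hac)
        _ _ ?_ ?_ ?_ ?_ ?_
      · rw [chain'_reverse_iff]
        exact (hP3 s₁)
      · rw [chain'_reverse_iff]
        exact (hP3 s₂)
      · rw [List.head?_reverse, List.head?_reverse, hP4 s₁, hP4 s₂, hφeq]
      · intro x hx w
        rw [List.getLast?_reverse, hP1 s₁] at hx
        cases hx
        have : inDeg F s₁ = 0 := (Finset.mem_filter.1 hs₁).2.2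
        exact fun hc => (inDeg_eq_zero_iff.1 this w) hc
      · intro x hx w
        rw [List.getLast?_reverse, hP1 s₂] at hx
        cases hx
        have : inDeg F s₂ = 0 := (Finset.mem_filter.1 hs₂).2.2
        exact fun hc => (inDeg_eq_zero_iff.1 this w) hc
    have hPeq : P s₁ = P s₂ := List.reverse_injective hrev
    have := hP1 s₁
    rw [hPeq, hP1 s₂] at this
    exact (Option.some.injEq _ _ ▸ this).symm
  -- surjectivity of φ onto endSet
  have hsurj : ∀ t, t ∈ endSet F → ∃ s, s ∈ startSet F ∧ φ s = t := by
    intro t ht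
    have htin : inDeg F t = 1 := (Finset.mem_filter.1 ht).2.1
    obtain ⟨l', h1, h2, h3, t', h4, h5⟩ := traj_exists (r := flip r)
      (fun a b c hab hac => houtf c a b hab hac) hncR' (Fintype.card V) [] t
      (by simp) (by simp [List.Chain']) (by simp)
    simp only [List.nil_append] at h2 h3
    set l := l'.reverse with hldef
    have hlc : l.Chain' r := by
      rw [hldef, chain'_reverse_iff]
      exact h3
    have hlh : l.head? = some t' := by rw [hldef, List.head?_reverse, h4]
    have hll : l.getLast? = some t := by rw [hldef, List.getLast?_reverse, h1]
    have hl'2 : 2 ≤ l'.length := by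
      obtain ⟨u, hu⟩ := (one_le_inDeg_iff (F := F) (v := t)).1 (by omega)
      cases hl' : l' with
      | nil => rw [hl'] at h1; simp at h1
      | cons a as =>
        cases as with
        | nil =>
          exfalso
          rw [hl'] at h1 h4
          simp only [List.head?_cons, Option.some.injEq] at h1
          simp only [List.getLast?_singleton, Option.some.injEq] at h4
          exact h5 u (by rw [← h4, h1]; exact hu)
        | cons b bs => simp
    have hl2 : 2 ≤ l.length := by rwa [hldef, List.length_reverse]
    -- t' is a start vertex
    have ht'in : inDeg F t' = 0 := inDeg_eq_zero_iff.2 (fun u hu => h5 u hu)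
    have ht'out : 1 ≤ outDeg F t' := by
      have hmem : t' ∈ l.dropLast := head_mem_dropLast hl2 hlh
      obtain ⟨w, hw⟩ := zt_of_dropLast hmem
      exact one_le_outDeg_iff.2 ⟨w, (chain'_iff_zt.1 hlc) _ hw⟩
    have ht'start : t' ∈ startSet F := by
      simp only [startSet, Finset.mem_filter, Finset.mem_univ, true_and]
      have := hout t'
      exact ⟨by omega, ht'in⟩
    refine ⟨t', ht'start, ?_⟩
    have hlP : l = P t' := huniqP t' l hlc hlh (by
      intro x hx
      rw [hll] at hx
      cases hx
      exact (Finset.mem_filter.1 ht).2.2)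
    have := hP4 t'
    rw [← hlP, hll] at this
    exact (Option.some.injEq _ _ ▸ this).symm
  -- cardinalities
  have hcards : (startSet F).card = (endSet F).card := by
    refine Finset.card_bij (fun s _ => φ s) (fun s hs => hφend s hs) ?_ ?_
    · intro s₁ hs₁ s₂ hs₂ h
      exact hinj s₁ hs₁ s₂ hs₂ h
    · intro t ht
      obtain ⟨s, hs, hst⟩ := hsurj t ht
      exact ⟨s, hs, hst⟩
  have htri : verts F = startSet F ∪ endSet F ∪ interiorSet F := verts_eq_tri hout hin
  have hSdisjE : Disjoint (startSet F) (endSet F) := by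
    rw [Finset.disjoint_left]
    intro v hv hv'
    simp only [startSet, endSet, Finset.mem_filter, Finset.mem_univ, true_and] at hv hv'
    omega
  have hSdisjI : Disjoint (startSet F) (interiorSet F) := by
    rw [Finset.disjoint_left]
    intro v hv hv'
    simp only [startSet, interiorSet, Finset.mem_filter, Finset.mem_univ, true_and] at hv hv'
    omega
  have hEdisjI : Disjoint (endSet F) (interiorSet F) := by
    rw [Finset.disjoint_left]
    intro v hv hv'
    simp only [endSet, interiorSet, Finset.mem_filter, Finset.mem_univ, true_and] at hv hv'
    omega
  have hIsub : interiorSet F ⊆ A ∪ B := by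
    intro v hv
    rw [← hVF, htri]
    exact Finset.mem_union_right _ hv
  have hAeq : A = endSet F ∪ (interiorSet F ∩ A) := by
    apply Finset.Subset.antisymm
    · intro v hv
      have hv' : v ∈ verts F := by rw [hVF]; exact Finset.mem_union_left _ hv
      rw [htri] at hv'
      rcases Finset.mem_union.1 hv' with hv' | hv'
      · rcases Finset.mem_union.1 hv' with hv' | hv'
        · exact absurd (hstart hv') (Finset.disjoint_left.1 hAB hv)
        · exact Finset.mem_union_left _ hv'
      · exact Finset.mem_union_right _ (Finset.mem_inter.2 ⟨hv', hv⟩)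
    · intro v hv
      rcases Finset.mem_union.1 hv with hv | hv
      · exact hend hv
      · exact (Finset.mem_inter.1 hv).2
  have hBeq : B = startSet F ∪ (interiorSet F ∩ B) := by
    apply Finset.Subset.antisymm
    · intro v hv
      have hv' : v ∈ verts F := by rw [hVF]; exact Finset.mem_union_right _ hv
      rw [htri] at hv'
      rcases Finset.mem_union.1 hv' with hv' | hv'
      · rcases Finset.mem_union.1 hv' with hv' | hv'
        · exact Finset.mem_union_left _ hv'
        · exact absurd (hend hv') (Finset.disjoint_right.1 hAB hv)
      · exact Finset.mem_union_right _ (Finset.mem_inter.2 ⟨hv', hv⟩)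
    · intro v hv
      rcases Finset.mem_union.1 hv with hv | hv
      · exact hstart hv
      · exact (Finset.mem_inter.1 hv).2
  have hm : (interiorSet F ∩ A).card = (interiorSet F ∩ B).card := by
    have h1 : (endSet F ∪ (interiorSet F ∩ A)).card
        = (endSet F).card + (interiorSet F ∩ A).card :=
      Finset.card_union_of_disjoint (Finset.disjoint_of_subset_right
        (Finset.inter_subset_left) hEdisjI)
    have h1' : A.card = (endSet F ∪ (interiorSet F ∩ A)).card := by
      conv_lhs => rw [hAeq]
    have h2 : (startSet F ∪ (interiorSet F ∩ B)).card
        = (startSet F).card + (interiorSet F ∩ B).card :=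
      Finset.card_union_of_disjoint (Finset.disjoint_of_subset_right
        (Finset.inter_subset_left) hSdisjI)
    have h2' : B.card = (startSet F ∪ (interiorSet F ∩ B)).card := by
      conv_lhs => rw [hBeq]
    omega
  by_cases hS0 : startSet F = ∅
  · -- trivial case : F is empty
    have hF0 : F = ∅ := by
      rw [Finset.eq_empty_iff_forall_notMem]
      intro e he
      obtain ⟨l', h1, h2, h3, t', h4, h5⟩ := traj_exists (r := flip r)
        (fun a b c hab hac => houtf c a b hab hac) hncR' (Fintype.card V) [] e.2
        (by simp) (by simp [List.Chain']) (by simp)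
      simp only [List.nil_append] at h2 h3
      have hl'2 : 2 ≤ l'.length := by
        cases hl' : l' with
        | nil => rw [hl'] at h1; simp at h1
        | cons a as =>
          cases as with
          | nil =>
            exfalso
            rw [hl'] at h1 h4
            simp only [List.head?_cons, Option.some.injEq] at h1
            simp only [List.getLast?_singleton, Option.some.injEq] at h4
            exact h5 e.1 (by rw [← h4, h1]; exact he)
          | cons b bs => simp
      set l := l'.reverse with hldef
      have hlc : l.Chain' r := by
        rw [hldef, chain'_reverse_iff]
        exact h3
      have hlh : l.head? = some t' := by rw [hldef, List.head?_reverse, h4]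
      have hl2 : 2 ≤ l.length := by rwa [hldef, List.length_reverse]
      have ht'in : inDeg F t' = 0 := inDeg_eq_zero_iff.2 (fun u hu => h5 u hu)
      have ht'out : 1 ≤ outDeg F t' := by
        have hmem : t' ∈ l.dropLast := head_mem_dropLast hl2 hlh
        obtain ⟨w, hw⟩ := zt_of_dropLast hmem
        exact one_le_outDeg_iff.2 ⟨w, (chain'_iff_zt.1 hlc) _ hw⟩
      have : t' ∈ startSet F := by
        simp only [startSet, Finset.mem_filter, Finset.mem_univ, true_and]
        have := hout t'
        exact ⟨by omega, ht'in⟩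
      rw [hS0] at this
      exact absurd this (Finset.notMem_empty t')
    have hAB0 : A ∪ B = ∅ := by
      rw [← hVF, hF0]
      simp [verts]
    have hA0 : A = ∅ := by
      rw [Finset.union_eq_empty] at hAB0
      exact hAB0.1
    have hB0 : B = ∅ := by
      rw [Finset.union_eq_empty] at hAB0
      exact hAB0.2
    have hE0 : endSet F = ∅ := by
      rw [Finset.eq_empty_iff_forall_notMem]
      intro t ht
      have := hend ht
      rw [hA0] at this
      exact absurd this (Finset.notMem_empty t)
    have hI0 : interiorSet F = ∅ := by
      rw [Finset.eq_empty_iff_forall_notMem]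
      intro t ht
      have h1 : outDeg F t = 1 := (Finset.mem_filter.1 ht).2.1
      obtain ⟨w, hw⟩ := (one_le_outDeg_iff (F := F) (v := t)).1 (by omega)
      rw [hF0] at hw
      exact absurd hw (Finset.notMem_empty _)
    have hOut0 : ∀ v, outDeg (∅ : Finset (V × V)) v = 0 := by
      intro v
      simp [outDeg]
    have hIn0 : ∀ v, inDeg (∅ : Finset (V × V)) v = 0 := by
      intro v
      simp [inDeg]
    have hSS0 : startSet (∅ : Finset (V × V)) = ∅ := by
      rw [Finset.eq_empty_iff_forall_notMem]
      intro v hv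
      have := (Finset.mem_filter.1 hv).2.1
      rw [hOut0] at this
      exact absurd this (by omega)
    refine ⟨∅, ⟨fun v => by rw [hOut0]; omega, fun v => by rw [hIn0]; omega, ?_⟩, ?_, ?_, ?_, ?_, ?_, ?_⟩
    · rintro ⟨v, l, hnd, hc, he⟩
      exact absurd he (Finset.notMem_empty _)
    · rw [hAB0]
      simp [verts]
    · intro e he
      exact absurd he (Finset.notMem_empty _)
    · intro s t
      constructor
      · rintro ⟨hs, -, -⟩
        rw [hS0] at hs
        exact absurd hs (Finset.notMem_empty _)
      · rintro ⟨hs, -, -⟩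
        rw [hSS0] at hs
        exact absurd hs (Finset.notMem_empty _)
    · rw [hSS0, hS0]
    · rw [hE0, Finset.eq_empty_iff_forall_notMem]
      intro v hv
      have := (Finset.mem_filter.1 hv).2.1
      rw [hIn0] at this
      exact absurd this (by omega)
    · rw [hI0, Finset.eq_empty_iff_forall_notMem]
      intro v hv
      have := (Finset.mem_filter.1 hv).2.1
      rw [hOut0] at this
      exact absurd this (by omega)
  · -- main case
    obtain ⟨s₁, S', hSlist⟩ : ∃ a l, (startSet F).toList = a :: l := by
      cases h : (startSet F).toList with
      | nil => exact absurd (by rw [← Finset.toList_eq_nil]; exact h) hS0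
      | cons a l => exact ⟨a, l, rfl⟩
    have hSnd : (s₁ :: S').Nodup := hSlist ▸ Finset.nodup_toList _
    have hSfin : ∀ s, s ∈ startSet F ↔ s ∈ s₁ :: S' := by
      intro s
      rw [← Finset.mem_toList, hSlist]
    have hs₁S : s₁ ∈ startSet F := (hSfin s₁).2 (by simp)
    have hS'mem : ∀ s ∈ S', s ∈ startSet F :=
      fun s hs => (hSfin s).2 (List.mem_cons_of_mem _ hs)
    have hs₁notS' : s₁ ∉ S' := (List.nodup_cons.1 hSnd).1
    have hS'nd : S'.Nodup := (List.nodup_cons.1 hSnd).2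
    set IA := (interiorSet F ∩ A).toList with hIAdef
    set IB := (interiorSet F ∩ B).toList with hIBdef
    have hIAlen : IA.length = IB.length := by
      rw [hIAdef, hIBdef, Finset.length_toList, Finset.length_toList, hm]
    have hIAmem : ∀ x ∈ IA, x ∈ interiorSet F ∧ x ∈ A := by
      intro x hx
      rw [hIAdef, Finset.mem_toList, Finset.mem_inter] at hx
      exact hx
    have hIBmem : ∀ x ∈ IB, x ∈ interiorSet F ∧ x ∈ B := by
      intro x hx
      rw [hIBdef, Finset.mem_toList, Finset.mem_inter] at hx
      exact hx
    have hIAnd : IA.Nodup := Finset.nodup_toList _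
    have hIBnd : IB.Nodup := Finset.nodup_toList _
    set Z := IA.zip IB with hZdef
    have hZfst : Z.map Prod.fst = IA := List.map_fst_zip (le_of_eq hIAlen)
    have hZsnd : Z.map Prod.snd = IB := List.map_snd_zip (le_of_eq hIAlen.symm)
    set ileave := Z.flatMap (fun p => [p.1, p.2]) with hileavedef
    have hZmem : ∀ p ∈ Z, p.1 ∈ IA ∧ p.2 ∈ IB := by
      intro p hp
      have : (p.1, p.2) ∈ IA.zip IB := by rw [← hZdef]; simpa using hp
      exact List.of_mem_zip this
    have hileave_mem : ∀ x ∈ ileave, x ∈ IA ∨ x ∈ IB := by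
      intro x hx
      rw [hileavedef] at hx
      obtain ⟨p, hp, hx⟩ := List.mem_flatMap.1 hx
      simp only [List.mem_cons, List.not_mem_nil, or_false] at hx
      rcases hx with rfl | rfl
      · exact Or.inl (hZmem p hp).1
      · exact Or.inr (hZmem p hp).2
    have hileaveI : ∀ x ∈ ileave, x ∈ interiorSet F := by
      intro x hx
      rcases hileave_mem x hx with h | h
      · exact (hIAmem x h).1
      · exact (hIBmem x h).1
    have hIA_ileave : ∀ x ∈ IA, x ∈ ileave := by
      intro x hx
      rw [← hZfst] at hx
      obtain ⟨p, hp, hpx⟩ := List.mem_map.1 hx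
      rw [hileavedef]
      exact List.mem_flatMap.2 ⟨p, hp, by rw [← hpx]; simp⟩
    have hIB_ileave : ∀ x ∈ IB, x ∈ ileave := by
      intro x hx
      rw [← hZsnd] at hx
      obtain ⟨p, hp, hpx⟩ := List.mem_map.1 hx
      rw [hileavedef]
      exact List.mem_flatMap.2 ⟨p, hp, by rw [← hpx]; simp⟩
    have hileave_perm : ileave.Perm (IA ++ IB) := by
      have h := flatMap_pair_perm Prod.fst Prod.snd Z
      rw [hZfst, hZsnd] at h
      exact h
    have hIAdisjIB : List.Disjoint IA IB := by
      intro a ha hb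
      exact absurd ((hIBmem a hb).2) (Finset.disjoint_left.1 hAB ((hIAmem a ha).2))
    have hileave_nd : ileave.Nodup :=
      hileave_perm.nodup_iff.2 (List.nodup_append'.2 ⟨hIAnd, hIBnd, hIAdisjIB⟩)
    set block₁ := s₁ :: (ileave ++ [φ s₁]) with hb1def
    set blocks := block₁ :: S'.map (fun s => [s, φ s]) with hblocksdef
    set L := blocks.flatten with hLdef
    set E := blocks.flatMap (fun b => b.zip b.tail) with hEdef
    set T := S'.flatMap (fun s => [s, φ s]) with hTdef
    have hT_perm : T.Perm (S' ++ S'.map φ) := by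
      have h := flatMap_pair_perm id φ S'
      rw [List.map_id] at h
      exact h
    have hTmem : ∀ a ∈ T, a ∈ S' ∨ ∃ s ∈ S', a = φ s := by
      intro a ha
      rw [hTdef] at ha
      obtain ⟨s, hs, ha⟩ := List.mem_flatMap.1 ha
      simp only [List.mem_cons, List.not_mem_nil, or_false] at ha
      rcases ha with rfl | rfl
      · exact Or.inl hs
      · exact Or.inr ⟨s, hs, rfl⟩
    have hL_eq : L = block₁ ++ T := by
      rw [hLdef, hblocksdef, hTdef, List.flatten_cons, List.flatMap_def]
    -- no-dup of the master list
    have hb1_nd : block₁.Nodup := by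
      rw [hb1def, List.nodup_cons]
      constructor
      · intro h
        rcases List.mem_append.1 h with h | h
        · exact absurd (hileaveI s₁ h) (Finset.disjoint_left.1 hSdisjI hs₁S)
        · simp only [List.mem_singleton] at h
          exact absurd (h ▸ hφend s₁ hs₁S) (Finset.disjoint_left.1 hSdisjE hs₁S)
      · rw [List.nodup_append']
        refine ⟨hileave_nd, List.nodup_singleton _, ?_⟩
        intro a ha hb
        simp only [List.mem_singleton] at hb
        subst hb
        exact absurd (hileaveI _ ha) (Finset.disjoint_left.1 hEdisjI (hφend s₁ hs₁S))
    have hT_nd : T.Nodup := by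
      refine hT_perm.nodup_iff.2 (List.nodup_append'.2 ⟨hS'nd, ?_, ?_⟩)
      · exact List.Nodup.map_on
          (fun x hx y hy h => hinj x (hS'mem x hx) y (hS'mem y hy) h) hS'nd
      · intro a ha hb
        obtain ⟨s, hs, hsa⟩ := List.mem_map.1 hb
        have haS : a ∈ startSet F := hS'mem a ha
        have haE : a ∈ endSet F := hsa ▸ hφend s (hS'mem s hs)
        exact absurd haE (Finset.disjoint_left.1 hSdisjE haS)
    have hb1disjT : List.Disjoint block₁ T := by
      intro a ha hb
      rcases hTmem a hb with hbS | ⟨s, hs, rfl⟩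
      · -- a ∈ S' : a start vertex
        rw [hb1def] at ha
        rcases List.mem_cons.1 ha with rfl | ha
        · exact hs₁notS' hbS
        · rcases List.mem_append.1 ha with ha | ha
          · exact absurd (hileaveI a ha)
              (Finset.disjoint_left.1 hSdisjI (hS'mem a hbS))
          · simp only [List.mem_singleton] at ha
            exact absurd (ha ▸ hφend s₁ hs₁S)
              (Finset.disjoint_left.1 hSdisjE (hS'mem a hbS))
      · -- a = φ s : an end vertex
        rw [hb1def] at ha
        rcases List.mem_cons.1 ha with ha | ha
        · exact absurd (ha ▸ hφend s (hS'mem s hs))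
            (Finset.disjoint_left.1 hSdisjE hs₁S)
        · rcases List.mem_append.1 ha with ha | ha
          · exact absurd (hileaveI _ ha)
              (Finset.disjoint_left.1 hEdisjI (hφend s (hS'mem s hs)))
          · simp only [List.mem_singleton] at ha
            have := hinj s₁ hs₁S s (hS'mem s hs) ha.symm
            exact hs₁notS' (this ▸ hs)
    have hLnd : L.Nodup := by
      rw [hL_eq, List.nodup_append']
      exact ⟨hb1_nd, hT_nd, hb1disjT⟩
    -- block structure
    have hblocks_cases : ∀ b ∈ blocks, b = block₁ ∨ ∃ s ∈ S', b = [s, φ s] := by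
      intro b hb
      rw [hblocksdef] at hb
      rcases List.mem_cons.1 hb with rfl | hb
      · exact Or.inl rfl
      · obtain ⟨s, hs, hb⟩ := List.mem_map.1 hb
        exact Or.inr ⟨s, hs, hb.symm⟩
    have hb1_mem : block₁ ∈ blocks := by rw [hblocksdef]; exact List.mem_cons_self
    have hpair_mem : ∀ s ∈ S', [s, φ s] ∈ blocks := by
      intro s hs
      rw [hblocksdef]
      exact List.mem_cons_of_mem _ (List.mem_map.2 ⟨s, hs, rfl⟩)
    have hb1_dropLast : block₁.dropLast = s₁ :: ileave := by
      rw [hb1def, show s₁ :: (ileave ++ [φ s₁]) = (s₁ :: ileave) ++ [φ s₁] by simp,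
        List.dropLast_concat]
    have hb1_tail : block₁.tail = ileave ++ [φ s₁] := by rw [hb1def, List.tail_cons]
    have hEmem : ∀ e : V × V, e ∈ E ↔ ∃ b ∈ blocks, e ∈ b.zip b.tail := by
      intro e
      rw [hEdef]
      exact List.mem_flatMap
    have hEzt : ∀ e : V × V, e ∈ E → e ∈ L.zip L.tail := by
      rintro ⟨x, y⟩ he
      obtain ⟨b, hb, hbe⟩ := (hEmem _).1 he
      obtain ⟨pre, suf, hps⟩ := flatten_decomp hb
      rw [hLdef, hps]
      exact zt_infix pre suf hbe
    set F' := E.toFinset with hF'def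
    have hF'mem : ∀ e : V × V, e ∈ F' ↔ e ∈ E := fun e => List.mem_toFinset
    have houtf' : ∀ a b c : V, (a, b) ∈ F' → (a, c) ∈ F' → b = c := by
      intro a b c hb hc
      exact zt_func hLnd (hEzt _ ((hF'mem _).1 hb)) (hEzt _ ((hF'mem _).1 hc))
    have hinf' : ∀ a b c : V, (a, c) ∈ F' → (b, c) ∈ F' → a = b := by
      intro a b c ha hb
      exact zt_cofunc hLnd (hEzt _ ((hF'mem _).1 ha)) (hEzt _ ((hF'mem _).1 hb))
    have hout' : ∀ v, outDeg F' v ≤ 1 := fun v => outDeg_le_one_iff.2 (fun w w' => houtf' v w w')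
    have hin' : ∀ v, inDeg F' v ≤ 1 :=
      fun v => inDeg_le_one_iff.2 (fun u u' hu hu' => hinf' u u' v hu hu')
    have hnc'F : ¬ HasCycle F' := by
      intro hcyc
      obtain ⟨v, l, x, hnd, hc, hlast, hedge⟩ := hasCycle_iff_relCycle.1 hcyc
      have hf : ∀ a b : V, (a, b) ∈ F' → L.idxOf a < L.idxOf b :=
        fun a b h => zt_idx hLnd (hEzt _ ((hF'mem _).1 h))
      have h1 : L.idxOf v ≤ L.idxOf x := chain'_le hf hc (by simp) hlast
      have h2 : L.idxOf x < L.idxOf v := hf _ _ hedge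
      omega
    -- sources and targets
    have hsrc : ∀ v : V, (∃ w, (v, w) ∈ F') ↔ ∃ b ∈ blocks, v ∈ b.dropLast := by
      intro v
      constructor
      · rintro ⟨w, hw⟩
        obtain ⟨b, hb, hbe⟩ := (hEmem _).1 ((hF'mem _).1 hw)
        exact ⟨b, hb, (zt_mem hbe).1⟩
      · rintro ⟨b, hb, hv⟩
        obtain ⟨w, hw⟩ := zt_of_dropLast hv
        exact ⟨w, (hF'mem _).2 ((hEmem _).2 ⟨b, hb, hw⟩)⟩
    have htgt : ∀ v : V, (∃ u, (u, v) ∈ F') ↔ ∃ b ∈ blocks, v ∈ b.tail := by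
      intro v
      constructor
      · rintro ⟨u, hu⟩
        obtain ⟨b, hb, hbe⟩ := (hEmem _).1 ((hF'mem _).1 hu)
        exact ⟨b, hb, (zt_mem hbe).2⟩
      · rintro ⟨b, hb, hv⟩
        obtain ⟨u, hu⟩ := zt_of_tail hv
        exact ⟨u, (hF'mem _).2 ((hEmem _).2 ⟨b, hb, hu⟩)⟩
    have hdrop_set : ∀ b ∈ blocks, ∀ v ∈ b.dropLast, v ∈ startSet F ∨ v ∈ interiorSet F := by
      intro b hb v hv
      rcases hblocks_cases b hb with rfl | ⟨s, hs, rfl⟩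
      · rw [hb1_dropLast] at hv
        rcases List.mem_cons.1 hv with rfl | hv
        · exact Or.inl hs₁S
        · exact Or.inr (hileaveI v hv)
      · simp only [List.dropLast_cons₂, List.dropLast_singleton, List.mem_singleton] at hv
        subst hv
        exact Or.inl (hS'mem v hs)
    have htail_set : ∀ b ∈ blocks, ∀ v ∈ b.tail, v ∈ interiorSet F ∨ v ∈ endSet F := by
      intro b hb v hv
      rcases hblocks_cases b hb with rfl | ⟨s, hs, rfl⟩
      · rw [hb1_tail] at hv
        rcases List.mem_append.1 hv with hv | hv
        · exact Or.inl (hileaveI v hv)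
        · simp only [List.mem_singleton] at hv
          subst hv
          exact Or.inr (hφend s₁ hs₁S)
      · simp only [List.tail_cons, List.mem_singleton] at hv
        subst hv
        exact Or.inr (hφend s (hS'mem s hs))
    -- the three degree-set equalities
    have hstart_eq : startSet F' = startSet F := by
      ext v
      simp only [startSet, Finset.mem_filter, Finset.mem_univ, true_and]
      constructor
      · rintro ⟨ho, hi⟩
        obtain ⟨b, hb, hv⟩ := (hsrc v).1 ((one_le_outDeg_iff (F := F') (v := v)).1 (by omega))
        have hnotgt : ∀ b' ∈ blocks, v ∉ b'.tail := by
          intro b' hb' hvt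
          obtain ⟨u, hu⟩ := (htgt v).2 ⟨b', hb', hvt⟩
          exact absurd hu (inDeg_eq_zero_iff.1 hi u)
        rcases hblocks_cases b hb with rfl | ⟨s, hs, rfl⟩
        · rw [hb1_dropLast] at hv
          rcases List.mem_cons.1 hv with rfl | hv
          · exact (Finset.mem_filter.1 hs₁S).2
          · exact absurd (by rw [hb1_tail]; exact List.mem_append_left _ hv)
              (hnotgt _ hb1_mem)
        · simp only [List.dropLast_cons₂, List.dropLast_singleton, List.mem_singleton] at hv
          subst hv
          exact (Finset.mem_filter.1 (hS'mem v hs)).2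
      · rintro ⟨ho, hi⟩
        have hvS : v ∈ startSet F := Finset.mem_filter.2 ⟨Finset.mem_univ v, ho, hi⟩
        have hsrc1 : ∃ w, (v, w) ∈ F' := by
          rcases List.mem_cons.1 ((hSfin v).1 hvS) with heq | hv'
          · exact (hsrc v).2 ⟨block₁, hb1_mem, by rw [hb1_dropLast, heq]; simp⟩
          · exact (hsrc v).2 ⟨[v, φ v], hpair_mem v hv', by simp⟩
        have htgt0 : ∀ u, (u, v) ∉ F' := by
          intro u hu
          obtain ⟨b, hb, hvt⟩ := (htgt v).1 ⟨u, hu⟩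
          rcases htail_set b hb v hvt with h | h
          · exact absurd h (Finset.disjoint_left.1 hSdisjI hvS)
          · exact absurd h (Finset.disjoint_left.1 hSdisjE hvS)
        have h1 : 1 ≤ outDeg F' v := one_le_outDeg_iff.2 hsrc1
        have h2 : inDeg F' v = 0 := inDeg_eq_zero_iff.2 htgt0
        have := hout' v
        exact ⟨by omega, h2⟩
    have hend_eq : endSet F' = endSet F := by
      ext v
      simp only [endSet, Finset.mem_filter, Finset.mem_univ, true_and]
      constructor
      · rintro ⟨hi, ho⟩
        obtain ⟨b, hb, hv⟩ := (htgt v).1 ((one_le_inDeg_iff (F := F') (v := v)).1 (by omega))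
        have hnotsrc : ∀ b' ∈ blocks, v ∉ b'.dropLast := by
          intro b' hb' hvd
          obtain ⟨w, hw⟩ := (hsrc v).2 ⟨b', hb', hvd⟩
          exact absurd hw (outDeg_eq_zero_iff.1 ho w)
        rcases hblocks_cases b hb with rfl | ⟨s, hs, rfl⟩
        · rw [hb1_tail] at hv
          rcases List.mem_append.1 hv with hv | hv
          · exact absurd (by rw [hb1_dropLast]; exact List.mem_cons_of_mem _ hv)
              (hnotsrc _ hb1_mem)
          · simp only [List.mem_singleton] at hv
            subst hv
            exact (Finset.mem_filter.1 (hφend s₁ hs₁S)).2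
        · simp only [List.tail_cons, List.mem_singleton] at hv
          subst hv
          exact (Finset.mem_filter.1 (hφend s (hS'mem s hs))).2
      · rintro ⟨hi, ho⟩
        have hvE : v ∈ endSet F := Finset.mem_filter.2 ⟨Finset.mem_univ v, hi, ho⟩
        obtain ⟨s, hsS, hst⟩ := hsurj v hvE
        have htgt1 : ∃ u, (u, v) ∈ F' := by
          rcases List.mem_cons.1 ((hSfin s).1 hsS) with heq | hv'
          · refine (htgt v).2 ⟨block₁, hb1_mem, ?_⟩
            rw [hb1_tail]
            refine List.mem_append_right _ ?_
            rw [← hst, heq]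
            simp
          · refine (htgt v).2 ⟨[s, φ s], hpair_mem s hv', ?_⟩
            rw [← hst]
            simp
        have hsrc0 : ∀ w, (v, w) ∉ F' := by
          intro w hw
          obtain ⟨b, hb, hvd⟩ := (hsrc v).1 ⟨w, hw⟩
          rcases hdrop_set b hb v hvd with h | h
          · exact absurd hvE (Finset.disjoint_left.1 hSdisjE h)
          · exact absurd h (Finset.disjoint_left.1 hEdisjI hvE)
        have h1 : 1 ≤ inDeg F' v := one_le_inDeg_iff.2 htgt1
        have h2 : outDeg F' v = 0 := outDeg_eq_zero_iff.2 hsrc0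
        have := hin' v
        exact ⟨by omega, h2⟩
    have hint_eq : interiorSet F' = interiorSet F := by
      ext v
      simp only [interiorSet, Finset.mem_filter, Finset.mem_univ, true_and]
      constructor
      · rintro ⟨ho, hi⟩
        obtain ⟨b, hb, hv⟩ := (hsrc v).1 ((one_le_outDeg_iff (F := F') (v := v)).1 (by omega))
        obtain ⟨b', hb', hv'⟩ := (htgt v).1 ((one_le_inDeg_iff (F := F') (v := v)).1 (by omega))
        rcases hdrop_set b hb v hv with h1 | h1
        · rcases htail_set b' hb' v hv' with h2 | h2
          · exact absurd h2 (Finset.disjoint_left.1 hSdisjI h1)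
          · exact absurd h2 (Finset.disjoint_left.1 hSdisjE h1)
        · exact (Finset.mem_filter.1 h1).2
      · rintro ⟨ho, hi⟩
        have hvI : v ∈ interiorSet F := Finset.mem_filter.2 ⟨Finset.mem_univ v, ho, hi⟩
        have hvAB : v ∈ A ∪ B := hIsub hvI
        have hvileave : v ∈ ileave := by
          rcases Finset.mem_union.1 hvAB with h | h
          · refine hIA_ileave v ?_
            rw [hIAdef, Finset.mem_toList, Finset.mem_inter]
            exact ⟨hvI, h⟩
          · refine hIB_ileave v ?_
            rw [hIBdef, Finset.mem_toList, Finset.mem_inter]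
            exact ⟨hvI, h⟩
        have h1 : 1 ≤ outDeg F' v := one_le_outDeg_iff.2 ((hsrc v).2
          ⟨block₁, hb1_mem, by rw [hb1_dropLast]; exact List.mem_cons_of_mem _ hvileave⟩)
        have h2 : 1 ≤ inDeg F' v := one_le_inDeg_iff.2 ((htgt v).2
          ⟨block₁, hb1_mem, by rw [hb1_tail]; exact List.mem_append_left _ hvileave⟩)
        have h3 := hout' v
        have h4 := hin' v
        omega
    have hverts' : verts F' = A ∪ B := by
      rw [verts_eq_tri hout' hin', hstart_eq, hend_eq, hint_eq, ← htri, hVF]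
    -- bipartite edges
    have hZAB : ∀ p ∈ Z, p.1 ∈ A ∧ p.2 ∈ B :=
      fun p hp => ⟨(hIAmem p.1 (hZmem p hp).1).2, (hIBmem p.2 (hZmem p hp).2).2⟩
    have hb1_chainAB : block₁.Chain'
        (fun a b => (a ∈ A ∧ b ∈ B) ∨ (a ∈ B ∧ b ∈ A)) := by
      rw [hb1def, hileavedef]
      exact alt_chain (hend (hφend s₁ hs₁S)) Z hZAB s₁ (hstart hs₁S)
    have hbip : ∀ e ∈ F', (e.1 ∈ A ∧ e.2 ∈ B) ∨ (e.1 ∈ B ∧ e.2 ∈ A) := by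
      rintro ⟨x, y⟩ he
      obtain ⟨b, hb, hbe⟩ := (hEmem _).1 ((hF'mem _).1 he)
      rcases hblocks_cases b hb with rfl | ⟨s, hs, rfl⟩
      · exact (chain'_iff_zt.1 hb1_chainAB) _ hbe
      · simp only [List.tail_cons, List.zip_cons_cons, List.zip_nil_right,
          List.mem_singleton, Prod.mk.injEq] at hbe
        obtain ⟨rfl, rfl⟩ := hbe
        exact Or.inr ⟨hstart (hS'mem x hs), hend (hφend x (hS'mem x hs))⟩
    -- blocks are path lists of F'
    have hblocks_len : ∀ b ∈ blocks, 2 ≤ b.length := by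
      intro b hb
      rcases hblocks_cases b hb with rfl | ⟨s, hs, rfl⟩
      · rw [hb1def]
        simp only [List.length_cons, List.length_append, List.length_singleton]
        omega
      · simp
    have hblocks_nodup : ∀ b ∈ blocks, b.Nodup := by
      intro b hb
      obtain ⟨pre, suf, hps⟩ := flatten_decomp hb
      have hLnd2 := hLnd
      rw [hLdef, hps] at hLnd2
      exact nodup_infix hLnd2
    have hpath' : ∀ b ∈ blocks, IsPathList F' b := by
      intro b hb
      refine ⟨hblocks_len b hb, hblocks_nodup b hb, chain'_iff_zt.2 ?_⟩
      intro p hp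
      exact (hF'mem _).2 ((hEmem _).2 ⟨b, hb, hp⟩)
    have hb1_head : block₁.head? = some s₁ := by rw [hb1def]; rfl
    have hb1_last : block₁.getLast? = some (φ s₁) := by
      rw [hb1def, show s₁ :: (ileave ++ [φ s₁]) = (s₁ :: ileave) ++ [φ s₁] by simp,
        List.getLast?_concat]
    -- the component correspondence
    have hiff : ∀ s t : V,
        (s ∈ startSet F ∧ t ∈ endSet F ∧
          ∃ l : List V, IsPathList F l ∧ l.head? = some s ∧ l.getLast? = some t) ↔
        (s ∈ startSet F' ∧ t ∈ endSet F' ∧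
          ∃ l : List V, IsPathList F' l ∧ l.head? = some s ∧ l.getLast? = some t) := by
      intro s t
      constructor
      · rintro ⟨hs, ht, l, ⟨hl1, hl2, hl3⟩, hh, hlast⟩
        have hlP : l = P s := huniqP s l hl3 hh (fun x hx => by
          rw [hlast] at hx
          cases hx
          exact (Finset.mem_filter.1 ht).2.2)
        have htφ : t = φ s := by
          have h4 := hP4 s
          rw [← hlP, hlast] at h4
          simpa using h4
        refine ⟨hstart_eq ▸ hs, hend_eq ▸ ht, ?_⟩
        rcases List.mem_cons.1 ((hSfin s).1 hs) with heq | hsS'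
        · exact ⟨block₁, hpath' _ hb1_mem, by rw [hb1_head, heq],
            by rw [hb1_last, htφ, heq]⟩
        · exact ⟨[s, φ s], hpath' _ (hpair_mem s hsS'), by simp, by simp [htφ]⟩
      · rintro ⟨hs, ht, l, ⟨hl1, hl2, hl3⟩, hh, hlast⟩
        have hsF : s ∈ startSet F := hstart_eq ▸ hs
        have htF : t ∈ endSet F := hend_eq ▸ ht
        obtain ⟨b, hbmem, hbh, hbl⟩ :
            ∃ b ∈ blocks, b.head? = some s ∧ b.getLast? = some (φ s) := by
          rcases List.mem_cons.1 ((hSfin s).1 hsF) with heq | hsS'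
          · exact ⟨block₁, hb1_mem, by rw [hb1_head, heq], by rw [hb1_last, heq]⟩
          · exact ⟨[s, φ s], hpair_mem s hsS', by simp, by simp⟩
        have hφsE' : φ s ∈ endSet F' := by
          rw [hend_eq]
          exact hφend s hsF
        have hleq : l = b := by
          refine chain_unique (fun a b c hab hac => houtf' a b c hab hac) l b hl3
            ((hpath' b hbmem).2.2) (by rw [hh, hbh]) ?_ ?_
          · intro x hx w hw
            rw [hlast] at hx
            cases hx
            exact (outDeg_eq_zero_iff.1 (Finset.mem_filter.1 ht).2.2 w) hw
          · intro x hx w hw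
            rw [hbl] at hx
            cases hx
            exact (outDeg_eq_zero_iff.1 (Finset.mem_filter.1 hφsE').2.2 w) hw
        have htφ : t = φ s := by
          rw [hleq, hbl] at hlast
          simpa using hlast.symm
        refine ⟨hsF, htF, P s, ⟨hlen2 s (Finset.mem_filter.1 hsF).2.1, hP2 s, hP3 s⟩,
          hP1 s, by rw [hP4 s, htφ]⟩
    exact ⟨F', ⟨hout', hin', hnc'F⟩, hverts', hbip, hiff, hstart_eq, hend_eq, hint_eq⟩
end

section
/- Let V be a finite set, let F be a linear forest with V(F) = V, and let W ⊆ V with |W| ≥ 2 and V⁺(F) ∪ V⁻(F) ⊆ W. Let F̃ be the digraph on vertex set W having an edge from u to v if and only if F contains a directed path from u to v all of whose internal vertices lie outside W. Let C̃ be a directed Hamilton cycle on the vertex set W such that F̃ ⊆ C̃ and no edge of C̃ outside F̃ is an edge of F. Then (C̃ ∖ F̃) ∪ F is a directed Hamilton cycle on V. -/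
open Finset

variable {V : Type}

namespace HCaux
open List

variable {V : Type} [DecidableEq V]

lemma out_det {F : Finset (V × V)} (hout : ∀ v, outDeg F v ≤ 1) {v a b : V}
    (ha : (v, a) ∈ F) (hb : (v, b) ∈ F) : a = b := by
  have h := hout v
  unfold outDeg at h
  have ha' : (v, a) ∈ F.filter (fun e => e.1 = v) := by simp [ha]
  have hb' : (v, b) ∈ F.filter (fun e => e.1 = v) := by simp [hb]
  have := Finset.card_le_one.mp h _ ha' _ hb'
  exact congrArg Prod.snd this

lemma in_det {F : Finset (V × V)} (hin : ∀ v, inDeg F v ≤ 1) {v a b : V}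
    (ha : (a, v) ∈ F) (hb : (b, v) ∈ F) : a = b := by
  have h := hin v
  unfold inDeg at h
  have ha' : (a, v) ∈ F.filter (fun e => e.2 = v) := by simp [ha]
  have hb' : (b, v) ∈ F.filter (fun e => e.2 = v) := by simp [hb]
  have := Finset.card_le_one.mp h _ ha' _ hb'
  exact congrArg Prod.fst this

noncomputable def fsucc (F : Finset (V × V)) (v : V) : V :=
  @Classical.epsilon V ⟨v⟩ (fun w => (v, w) ∈ F)

noncomputable def fpred (F : Finset (V × V)) (v : V) : V :=
  @Classical.epsilon V ⟨v⟩ (fun w => (w, v) ∈ F)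

lemma fsucc_mem {F : Finset (V × V)} {v : V} (h : ∃ w, (v, w) ∈ F) :
    (v, fsucc F v) ∈ F := @Classical.epsilon_spec V (fun w => (v, w) ∈ F) h

lemma fpred_mem {F : Finset (V × V)} {v : V} (h : ∃ w, (w, v) ∈ F) :
    (fpred F v, v) ∈ F := @Classical.epsilon_spec V (fun w => (w, v) ∈ F) h

lemma fsucc_eq {F : Finset (V × V)} (hout : ∀ v, outDeg F v ≤ 1) {v w : V}
    (h : (v, w) ∈ F) : fsucc F v = w :=
  out_det hout (fsucc_mem ⟨w, h⟩) h

lemma fpred_eq {F : Finset (V × V)} (hin : ∀ v, inDeg F v ≤ 1) {v w : V}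
    (h : (w, v) ∈ F) : fpred F v = w :=
  in_det hin (fpred_mem ⟨w, h⟩) h

/-- If the iterates of `g` from `x` are eventually periodic and consecutive
iterates are edges of `F`, then `F` has a cycle. -/
lemma hasCycle_of_period {F : Finset (V × V)} (g : V → V) (x : V) (m : ℕ)
    (hm : 0 < m) (hper : g^[m] x = x)
    (hx : ∀ n < m, (g^[n] x, g^[n + 1] x) ∈ F) : HasCycle F := by
  classical
  set p := Function.minimalPeriod g x with hp
  have hpp : Function.IsPeriodicPt g p x := Function.isPeriodicPt_minimalPeriod g x
  have hppos : 0 < p := (Function.IsPeriodicPt.minimalPeriod_pos hm hper)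
  have hple : p ≤ m := Function.IsPeriodicPt.minimalPeriod_le hm hper
  refine ⟨x, (List.range (p - 1)).map (fun k => g^[k + 1] x), ?_, ?_, ?_⟩
  · -- Nodup
    have hlist : x :: (List.range (p - 1)).map (fun k => g^[k + 1] x)
        = (List.range p).map (fun k => g^[k] x) := by
      conv_rhs => rw [show p = (p - 1) + 1 by omega, List.range_succ_eq_map]
      simp [List.map_map, Function.comp_def, Nat.add_comm]
    rw [hlist]
    refine List.Nodup.map_on ?_ List.nodup_range
    intro a ha b hb hab
    exact Function.iterate_injOn_Iio_minimalPeriod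
      (by simpa using List.mem_range.mp ha) (by simpa using List.mem_range.mp hb) hab
  · -- Chain'
    have hlist : x :: (List.range (p - 1)).map (fun k => g^[k + 1] x)
        = (List.range p).map (fun k => g^[k] x) := by
      conv_rhs => rw [show p = (p - 1) + 1 by omega, List.range_succ_eq_map]
      simp [List.map_map, Function.comp_def, Nat.add_comm]
    rw [hlist]
    rw [List.Chain', List.isChain_iff_getElem]
    intro i hi
    simp only [List.get_eq_getElem, List.getElem_map, List.getElem_range]
    exact hx i (by simp at hi; omega)
  · -- closing edge
    have hlen : (x :: (List.range (p - 1)).map (fun k => g^[k + 1] x)).length = p := by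
      simp; omega
    rw [List.getLast_eq_getElem]
    have hgl : (x :: (List.range (p - 1)).map (fun k => g^[k + 1] x))[(x :: (List.range (p - 1)).map (fun k => g^[k + 1] x)).length - 1] = g^[p - 1] x := by
      rcases Nat.eq_or_lt_of_le hppos with h1 | h2
      · simp [hlen, ← h1]
      · have : p - 1 - 1 < p - 1 := by omega
        simp only [hlen]
        rw [List.getElem_cons]
        split
        · omega
        · simp only [List.getElem_map, List.getElem_range]
          congr 1
          omega
    rw [hgl]
    have := hx (p - 1) (by omega)
    rwa [show p - 1 + 1 = p by omega, hpp] at this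

lemma hasCycle_of_period_rev {F : Finset (V × V)} (g : V → V) (x : V) (m : ℕ)
    (hm : 0 < m) (hper : g^[m] x = x)
    (hx : ∀ n < m, (g^[n + 1] x, g^[n] x) ∈ F) : HasCycle F := by
  classical
  obtain ⟨p, hppos, hple, hpp, hinj⟩ : ∃ p, 0 < p ∧ p ≤ m ∧ g^[p] x = x ∧
      ∀ a < p, ∀ b < p, g^[a] x = g^[b] x → a = b := by
    refine ⟨Function.minimalPeriod g x,
      Function.IsPeriodicPt.minimalPeriod_pos hm hper,
      Function.IsPeriodicPt.minimalPeriod_le hm hper,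
      Function.isPeriodicPt_minimalPeriod g x, ?_⟩
    intro a ha b hb hab
    exact Function.iterate_injOn_Iio_minimalPeriod (by simpa using ha) (by simpa using hb) hab
  refine ⟨x, (List.range (p - 1)).map (fun k => g^[p - 1 - k] x), ?_, ?_, ?_⟩
  · -- Nodup
    refine List.Nodup.cons ?_ ?_
    · intro hxmem
      simp only [List.mem_map, List.mem_range] at hxmem
      obtain ⟨k, hk, hkx⟩ := hxmem
      have h0 : p - 1 - k = 0 := hinj _ (by omega) 0 (by omega) (by simpa using hkx)
      omega
    · refine List.Nodup.map_on ?_ List.nodup_range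
      intro a ha b hb hab
      simp only [List.mem_range] at ha hb
      have := hinj _ (by omega) _ (by omega) hab
      omega
  · rw [List.Chain', List.isChain_iff_getElem]
    intro i hi
    simp only [List.length_cons, List.length_map, List.length_range] at hi
    have hi' : i < p - 1 := by omega
    cases i with
    | zero =>
      simp only [List.get_eq_getElem, List.getElem_cons_zero, List.getElem_cons_succ,
        List.getElem_map, List.getElem_range, Nat.sub_zero]
      have := hx (p - 1) (by omega)
      rwa [show p - 1 + 1 = p by omega, hpp] at this
    | succ j =>
      simp only [List.get_eq_getElem, List.getElem_cons_succ, List.getElem_map,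
        List.getElem_range]
      have := hx (p - 1 - (j + 1)) (by omega)
      rwa [show p - 1 - (j + 1) + 1 = p - 1 - j by omega] at this
  · -- closing edge
    rcases Nat.eq_or_lt_of_le hppos with h1 | h2
    · have hgx : g x = x := by
        have h := hpp
        rw [← h1] at h
        simpa using h
      have : p - 1 = 0 := by omega
      simp only [this, List.range_zero, List.map_nil, List.getLast_singleton]
      have := hx 0 hm
      simpa [hgx] using this
    · have hne : (List.range (p - 1)).map (fun k => g^[p - 1 - k] x) ≠ [] := by
        simp; omega
      rw [List.getLast_cons hne]
      rw [List.getLast_eq_getElem]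
      simp only [List.length_map, List.length_range, List.getElem_map, List.getElem_range]
      have h3 : p - 1 - (p - 1 - 1) = 1 := by omega
      rw [h3]
      simpa using hx 0 hm

end HCaux
namespace HCaux
open List

variable {V : Type} [DecidableEq V]

lemma chain_get {F : Finset (V × V)} {g : V → V}
    (hdet : ∀ a b : V, (a, b) ∈ F → g a = b)
    {l : List V} (hc : l.Chain' (fun a b => (a, b) ∈ F)) :
    ∀ i (h : i < l.length), l[i] = g^[i] (l[0]'(by omega)) := by
  intro i
  induction i with
  | zero => intro h; rfl
  | succ j ih =>
    intro h
    have hj : j < l.length := by omega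
    have hE := List.isChain_iff_getElem.mp hc j (by omega)
    have hgd := hdet _ _ hE
    rw [Function.iterate_succ_apply', ← ih hj, hgd]

lemma hasCycle_of_dup {F : Finset (V × V)} (hout : ∀ v, outDeg F v ≤ 1)
    {l : List V} (hc : l.Chain' (fun a b => (a, b) ∈ F)) (hnd : ¬ l.Nodup) :
    HasCycle F := by
  classical
  set g := fsucc F with hg
  have hdet : ∀ a b : V, (a, b) ∈ F → g a = b := fun a b h => fsucc_eq hout h
  rw [List.nodup_iff_injective_get] at hnd
  rw [Function.not_injective_iff] at hnd
  obtain ⟨a, b, hab, hne⟩ := hnd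
  have key : ∀ (i j : ℕ) (hi : i < l.length) (hj : j < l.length), i < j →
      l[i] = l[j] → HasCycle F := by
    intro i j hi hj hij heq
    have h0 : 0 < l.length := by omega
    have hx : ∀ k (hk : k < l.length), l[k] = g^[k] (l[0]'h0) := fun k hk =>
      chain_get hdet hc k hk
    apply hasCycle_of_period g (l[i]'hi) (j - i) (by omega)
    · have e3 : g^[j - i] (l[i]'hi) = l[j]'hj := by
        conv_lhs => rw [hx i hi]
        rw [← Function.iterate_add_apply, show j - i + i = j by omega, ← hx j hj]
      rw [e3]
      exact heq.symm
    · intro n hn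
      have h1 : n + i < l.length := by omega
      have h2 : n + i + 1 < l.length := by omega
      have e1 : g^[n] (l[i]'hi) = l[n + i]'h1 := by
        rw [hx i hi, ← Function.iterate_add_apply, hx (n + i) h1]
      have e2 : g^[n + 1] (l[i]'hi) = l[n + i + 1]'h2 := by
        rw [hx i hi, ← Function.iterate_add_apply, hx (n + i + 1) h2,
          show n + 1 + i = n + i + 1 by omega]
      rw [e1, e2]
      have := List.isChain_iff_getElem.mp hc (n + i) (by omega)
      simpa using this
  simp only [List.get_eq_getElem] at hab
  rcases lt_or_gt_of_ne hne with h | h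
  · exact key a b a.isLt b.isLt (by exact_mod_cast h) hab
  · exact key b a b.isLt a.isLt (by exact_mod_cast h) hab.symm

lemma outDeg_pos_iff {F : Finset (V × V)} {v : V} :
    0 < outDeg F v ↔ ∃ w, (v, w) ∈ F := by
  unfold outDeg
  rw [Finset.card_pos]
  constructor
  · rintro ⟨e, he⟩
    simp only [Finset.mem_filter] at he
    exact ⟨e.2, by rw [← he.2]; exact he.1⟩
  · rintro ⟨w, hw⟩
    exact ⟨(v, w), by simp [hw]⟩

lemma inDeg_pos_iff {F : Finset (V × V)} {v : V} :
    0 < inDeg F v ↔ ∃ w, (w, v) ∈ F := by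
  unfold inDeg
  rw [Finset.card_pos]
  constructor
  · rintro ⟨e, he⟩
    simp only [Finset.mem_filter] at he
    exact ⟨e.1, by rw [← he.2]; exact he.1⟩
  · rintro ⟨w, hw⟩
    exact ⟨(w, v), by simp [hw]⟩

lemma deg_of_not_mem_W [Fintype V] {F : Finset (V × V)} {W : Finset V}
    (hF : IsLinearForest F) (hVF : verts F = Finset.univ)
    (hWends : startSet F ∪ endSet F ⊆ W) {v : V} (hv : v ∉ W) :
    outDeg F v = 1 ∧ inDeg F v = 1 := by
  have hvv : v ∈ verts F := by rw [hVF]; exact Finset.mem_univ v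
  have hdeg : 0 < outDeg F v ∨ 0 < inDeg F v := by
    unfold verts at hvv
    rcases Finset.mem_union.mp hvv with h | h
    · left
      rw [outDeg_pos_iff]
      obtain ⟨e, he, hev⟩ := Finset.mem_image.mp h
      exact ⟨e.2, by rw [← hev]; simpa using he⟩
    · right
      rw [inDeg_pos_iff]
      obtain ⟨e, he, hev⟩ := Finset.mem_image.mp h
      exact ⟨e.1, by rw [← hev]; simpa using he⟩
  have hout := hF.1 v
  have hin := hF.2.1 v
  by_cases h1 : outDeg F v = 0
  · have h2 : inDeg F v = 1 := by omega
    exfalso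
    apply hv
    apply hWends
    apply Finset.mem_union_right
    simp [endSet, h1, h2]
  · by_cases h2 : inDeg F v = 0
    · have h1' : outDeg F v = 1 := by omega
      exfalso
      apply hv
      apply hWends
      apply Finset.mem_union_left
      simp [startSet, h1', h2]
    · omega

end HCaux
namespace HCaux
open List

variable {V : Type} [DecidableEq V] [Fintype V]

lemma walk_fwd {F : Finset (V × V)} {W : Finset V}
    (hF : IsLinearForest F) (hVF : verts F = Finset.univ)
    (hWends : startSet F ∪ endSet F ⊆ W) {v : V} (hv : v ∉ W) :
    ∃ l : List V, l.Chain' (fun a b => (a, b) ∈ F) ∧ l.head? = some v ∧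
      l.Nodup ∧ 2 ≤ l.length ∧ (∀ x ∈ l.dropLast, x ∉ W) ∧
      ∃ w ∈ W, l.getLast? = some w := by
  classical
  set g := fsucc F with hg
  have hA : ∀ y : V, y ∉ W → (y, g y) ∈ F := by
    intro y hy
    have := (deg_of_not_mem_W hF hVF hWends hy).1
    exact fsucc_mem (outDeg_pos_iff.mp (by omega))
  have hB : ∃ n, 0 < n ∧ g^[n] v ∈ W := by
    by_contra hB
    push_neg at hB
    have hall : ∀ n, g^[n] v ∉ W := by
      intro n
      cases n with
      | zero => simpa using hv
      | succ k => exact hB _ (Nat.succ_pos k)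
    have key : ∀ i j : ℕ, i < j → g^[i] v = g^[j] v → False := by
      intro i j hij heq
      apply hF.2.2
      apply hasCycle_of_period g (g^[i] v) (j - i) (by omega)
      · rw [← Function.iterate_add_apply, show j - i + i = j by omega]
        exact heq.symm
      · intro n hn
        rw [← Function.iterate_add_apply, ← Function.iterate_add_apply,
          show n + 1 + i = (n + i) + 1 by omega, Function.iterate_succ_apply']
        exact hA _ (hall (n + i))
    obtain ⟨i, j, hne, heq⟩ := Finite.exists_ne_map_eq_of_infinite (fun n : ℕ => g^[n] v)
    rcases lt_or_gt_of_ne hne with h | h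
    · exact key i j h heq
    · exact key j i h heq.symm
  set n := Nat.find hB with hn
  obtain ⟨hnpos, hnW⟩ := Nat.find_spec hB
  have hmin : ∀ k < n, g^[k] v ∉ W := by
    intro k hk
    cases Nat.eq_zero_or_pos k with
    | inl h => subst h; simpa using hv
    | inr h =>
      intro hkW
      exact Nat.find_min hB hk ⟨h, hkW⟩
  refine ⟨(List.range (n + 1)).map (fun k => g^[k] v), ?_, ?_, ?_, ?_, ?_, ?_⟩
  · rw [List.Chain', List.isChain_iff_getElem]
    intro i hi
    simp only [List.length_map, List.length_range] at hi
    simp only [List.get_eq_getElem, List.getElem_map, List.getElem_range]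
    rw [Function.iterate_succ_apply']
    exact hA _ (hmin i (by omega))
  · rw [List.range_succ_eq_map]
    simp
  · by_contra hnd
    apply hF.2.2
    refine hasCycle_of_dup hF.1 ?_ hnd
    rw [List.Chain', List.isChain_iff_getElem]
    intro i hi
    simp only [List.length_map, List.length_range] at hi
    simp only [List.get_eq_getElem, List.getElem_map, List.getElem_range]
    rw [Function.iterate_succ_apply']
    exact hA _ (hmin i (by omega))
  · simp only [List.length_map, List.length_range]
    omega
  · intro x hx
    rw [List.range_succ, List.map_append, List.map_cons, List.map_nil, List.dropLast_concat] at hx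
    simp only [List.mem_map, List.mem_range] at hx
    obtain ⟨k, hk, rfl⟩ := hx
    exact hmin k hk
  · refine ⟨g^[n] v, hnW, ?_⟩
    rw [List.range_succ, List.map_append]
    simp [List.getLast?_concat]

lemma walk_bwd {F : Finset (V × V)} {W : Finset V}
    (hF : IsLinearForest F) (hVF : verts F = Finset.univ)
    (hWends : startSet F ∪ endSet F ⊆ W) {v : V} (hv : v ∉ W) :
    ∃ l : List V, l.Chain' (fun a b => (a, b) ∈ F) ∧ l.getLast? = some v ∧
      l.Nodup ∧ 2 ≤ l.length ∧ (∀ x ∈ l.tail, x ∉ W) ∧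
      ∃ w ∈ W, l.head? = some w := by
  classical
  set g := fpred F with hg
  have hA : ∀ y : V, y ∉ W → (g y, y) ∈ F := by
    intro y hy
    have := (deg_of_not_mem_W hF hVF hWends hy).2
    exact fpred_mem (inDeg_pos_iff.mp (by omega))
  have hB : ∃ n, 0 < n ∧ g^[n] v ∈ W := by
    by_contra hB
    push_neg at hB
    have hall : ∀ n, g^[n] v ∉ W := by
      intro n
      cases n with
      | zero => simpa using hv
      | succ k => exact hB _ (Nat.succ_pos k)
    have key : ∀ i j : ℕ, i < j → g^[i] v = g^[j] v → False := by
      intro i j hij heq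
      apply hF.2.2
      apply hasCycle_of_period_rev g (g^[i] v) (j - i) (by omega)
      · rw [← Function.iterate_add_apply, show j - i + i = j by omega]
        exact heq.symm
      · intro n hn
        rw [← Function.iterate_add_apply, ← Function.iterate_add_apply,
          show n + 1 + i = (n + i) + 1 by omega, Function.iterate_succ_apply']
        exact hA _ (hall (n + i))
    obtain ⟨i, j, hne, heq⟩ := Finite.exists_ne_map_eq_of_infinite (fun n : ℕ => g^[n] v)
    rcases lt_or_gt_of_ne hne with h | h
    · exact key i j h heq
    · exact key j i h heq.symm
  set n := Nat.find hB with hn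
  obtain ⟨hnpos, hnW⟩ := Nat.find_spec hB
  have hmin : ∀ k < n, g^[k] v ∉ W := by
    intro k hk
    cases Nat.eq_zero_or_pos k with
    | inl h => subst h; simpa using hv
    | inr h =>
      intro hkW
      exact Nat.find_min hB hk ⟨h, hkW⟩
  have hchainrev : ((List.range (n + 1)).map (fun k => g^[k] v)).reverse.Chain'
      (fun a b => (a, b) ∈ F) := by
    rw [List.Chain', List.isChain_reverse]
    rw [List.isChain_iff_getElem]
    intro i hi
    simp only [List.length_map, List.length_range] at hi
    simp only [List.get_eq_getElem, List.getElem_map, List.getElem_range]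
    show (g^[i+1] v, g^[i] v) ∈ F
    rw [Function.iterate_succ_apply']
    exact hA _ (hmin i (by omega))
  refine ⟨((List.range (n + 1)).map (fun k => g^[k] v)).reverse, hchainrev, ?_, ?_, ?_, ?_, ?_⟩
  · rw [List.getLast?_reverse, List.range_succ_eq_map]
    simp
  · by_contra hnd
    exact hF.2.2 (hasCycle_of_dup hF.1 hchainrev hnd)
  · simp only [List.length_reverse, List.length_map, List.length_range]
    omega
  · intro x hx
    rw [List.tail_reverse] at hx
    rw [List.mem_reverse] at hx
    rw [List.range_succ, List.map_append, List.map_cons, List.map_nil, List.dropLast_concat] at hx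
    simp only [List.mem_map, List.mem_range] at hx
    obtain ⟨k, hk, rfl⟩ := hx
    exact hmin k hk
  · refine ⟨g^[n] v, hnW, ?_⟩
    rw [List.head?_reverse, List.range_succ, List.map_append]
    simp [List.getLast?_concat]

end HCaux
namespace HCaux
open List

variable {V : Type} [DecidableEq V]

/-- Uniqueness of paths following a deterministic relation, stopping at the
first vertex satisfying `S`. -/
lemma PU_gen {E : V → V → Prop} (hdet : ∀ a b c : V, E a b → E a c → b = c)
    {S : V → Prop} :
    ∀ l1 l2 : List V, l1.Chain' E → l2.Chain' E → l1.head? = l2.head? →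
      2 ≤ l1.length → 2 ≤ l2.length →
      (∀ x ∈ l1.tail.dropLast, ¬ S x) → (∀ x ∈ l2.tail.dropLast, ¬ S x) →
      (∀ x, l1.getLast? = some x → S x) → (∀ x, l2.getLast? = some x → S x) →
      l1 = l2 := by
  intro l1
  induction l1 with
  | nil => intro l2 _ _ _ hl1; simp at hl1
  | cons u t1 ih =>
    intro l2 hc1 hc2 hh hl1 hl2 hi1 hi2 he1 he2
    cases l2 with
    | nil => simp at hl2
    | cons u' t2 =>
      simp only [List.head?_cons, Option.some.injEq] at hh
      subst hh
      cases t1 with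
      | nil => simp at hl1
      | cons a s1 =>
        cases t2 with
        | nil => simp at hl2
        | cons b s2 =>
          have hab : a = b :=
            hdet u a b (List.isChain_cons_cons.mp hc1).1 (List.isChain_cons_cons.mp hc2).1
          subst hab
          by_cases hS : S a
          · -- a satisfies S, so it must be the last vertex of both lists
            cases s1 with
            | cons c s1' =>
              exfalso
              exact hi1 a (by simp) hS
            | nil =>
              cases s2 with
              | cons d s2' =>
                exfalso
                exact hi2 a (by simp) hS
              | nil => rfl
          · -- a does not satisfy S, so both lists continue
            cases s1 with
            | nil =>
              exfalso
              exact hS (he1 a (by simp))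
            | cons c s1' =>
              cases s2 with
              | nil =>
                exfalso
                exact hS (he2 a (by simp))
              | cons d s2' =>
                have key := ih (a :: d :: s2') (List.isChain_cons_cons.mp hc1).2
                  (List.isChain_cons_cons.mp hc2).2 rfl (by simp) (by simp)
                  (fun x hx => hi1 x (by simp at hx ⊢; tauto))
                  (fun x hx => hi2 x (by simp at hx ⊢; tauto))
                  (fun x hx => he1 x (by rwa [List.getLast?_cons_cons]))
                  (fun x hx => he2 x (by rwa [List.getLast?_cons_cons]))
                rw [key]

lemma PU_fwd {F : Finset (V × V)} (hout : ∀ v, outDeg F v ≤ 1) {W : Finset V}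
    {l1 l2 : List V} (hc1 : l1.Chain' (fun a b => (a, b) ∈ F))
    (hc2 : l2.Chain' (fun a b => (a, b) ∈ F)) (hh : l1.head? = l2.head?)
    (hl1 : 2 ≤ l1.length) (hl2 : 2 ≤ l2.length)
    (hi1 : ∀ x ∈ l1.tail.dropLast, x ∉ W) (hi2 : ∀ x ∈ l2.tail.dropLast, x ∉ W)
    (he1 : ∀ x, l1.getLast? = some x → x ∈ W)
    (he2 : ∀ x, l2.getLast? = some x → x ∈ W) : l1 = l2 :=
  PU_gen (E := fun a b => (a, b) ∈ F) (S := fun x => x ∈ W)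
    (fun _ _ _ hab hac => out_det hout hab hac)
    l1 l2 hc1 hc2 hh hl1 hl2 hi1 hi2 he1 he2

lemma PU_bwd {F : Finset (V × V)} (hin : ∀ v, inDeg F v ≤ 1) {W : Finset V}
    {l1 l2 : List V} (hc1 : l1.Chain' (fun a b => (a, b) ∈ F))
    (hc2 : l2.Chain' (fun a b => (a, b) ∈ F)) (hh : l1.getLast? = l2.getLast?)
    (hl1 : 2 ≤ l1.length) (hl2 : 2 ≤ l2.length)
    (hi1 : ∀ x ∈ l1.tail.dropLast, x ∉ W) (hi2 : ∀ x ∈ l2.tail.dropLast, x ∉ W)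
    (he1 : ∀ x, l1.head? = some x → x ∈ W)
    (he2 : ∀ x, l2.head? = some x → x ∈ W) : l1 = l2 := by
  have hmid : ∀ l : List V, l.reverse.tail.dropLast = l.tail.dropLast.reverse := by
    intro l
    rw [List.tail_reverse, List.dropLast_reverse, List.tail_dropLast]
  have key := PU_gen (E := fun a b => (b, a) ∈ F) (S := fun x => x ∈ W)
    (fun _ _ _ hab hac => in_det hin hab hac) l1.reverse l2.reverse
    (by rw [List.Chain', List.isChain_reverse]; exact hc1)
    (by rw [List.Chain', List.isChain_reverse]; exact hc2)
    (by rw [List.head?_reverse, List.head?_reverse]; exact hh)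
    (by simpa using hl1) (by simpa using hl2)
    (by intro x hx; rw [hmid, List.mem_reverse] at hx; exact hi1 x hx)
    (by intro x hx; rw [hmid, List.mem_reverse] at hx; exact hi2 x hx)
    (by intro x hx; rw [List.getLast?_reverse] at hx; exact he1 x hx)
    (by intro x hx; rw [List.getLast?_reverse] at hx; exact he2 x hx)
  exact List.reverse_injective key

end HCaux
namespace HCaux
open List

variable {V : Type} [DecidableEq V]

lemma listEdges_nil : listEdges ([] : List V) = ∅ := rfl

lemma listEdges_singleton (x : V) : listEdges [x] = ∅ := rfl

lemma listEdges_cons₂ (a b : V) (t : List V) :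
    listEdges (a :: b :: t) = insert (a, b) (listEdges (b :: t)) := by
  simp [listEdges]

lemma listEdges_subset_of_chain {F : Finset (V × V)} :
    ∀ {l : List V}, l.Chain' (fun x y => (x, y) ∈ F) → listEdges l ⊆ F := by
  intro l
  induction l with
  | nil => intro _; simp [listEdges_nil]
  | cons a t ih =>
    intro hc
    cases t with
    | nil => simp [listEdges_singleton]
    | cons b t' =>
      intro e he
      rw [listEdges_cons₂, Finset.mem_insert] at he
      rcases he with rfl | he
      · exact (List.isChain_cons_cons.mp hc).1
      · exact ih (List.isChain_cons_cons.mp hc).2 he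

lemma listEdges_split (x : V) : ∀ (a b : List V),
    listEdges (a ++ x :: b) = listEdges (a ++ [x]) ∪ listEdges (x :: b) := by
  intro a
  induction a with
  | nil => intro b; simp [listEdges_singleton]
  | cons y a' ih =>
    intro b
    cases a' with
    | nil =>
      simp only [List.nil_append, List.cons_append, listEdges_cons₂, listEdges_singleton]
      rw [Finset.insert_eq, Finset.insert_eq, Finset.union_empty]
    | cons z a'' =>
      have h1 : (y :: z :: a'') ++ x :: b = y :: z :: (a'' ++ x :: b) := rfl
      have h2 : (y :: z :: a'') ++ [x] = y :: z :: (a'' ++ [x]) := rfl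
      rw [h1, h2, listEdges_cons₂, listEdges_cons₂,
        show z :: (a'' ++ x :: b) = (z :: a'') ++ x :: b from rfl,
        show z :: (a'' ++ [x]) = (z :: a'') ++ [x] from rfl, ih b, Finset.insert_union]

lemma getLast_mem_listEdges (x : V) : ∀ (l : List V) (h : l ≠ []),
    (l.getLast h, x) ∈ listEdges (l ++ [x]) := by
  intro l
  induction l with
  | nil => intro h; exact absurd rfl h
  | cons a t ih =>
    intro h
    cases t with
    | nil => simp [listEdges_cons₂, listEdges_singleton]
    | cons b t' =>
      rw [List.getLast_cons (by simp)]
      have : (a :: b :: t') ++ [x] = a :: ((b :: t') ++ [x]) := rfl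
      rw [this, show a :: ((b :: t') ++ [x]) = a :: b :: (t' ++ [x]) from rfl, listEdges_cons₂]
      apply Finset.mem_insert_of_mem
      exact ih (by simp)

lemma exist_path [Fintype V] {F : Finset (V × V)} {W : Finset V}
    (hF : IsLinearForest F) (hVF : verts F = Finset.univ)
    (hWends : startSet F ∪ endSet F ⊆ W) {a b : V} (hab : (a, b) ∈ F) :
    ∃ l : List V, l.Chain' (fun x y => (x, y) ∈ F) ∧ l.Nodup ∧ 2 ≤ l.length ∧
      (∃ u ∈ W, l.head? = some u) ∧ (∃ w ∈ W, l.getLast? = some w) ∧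
      (∀ x ∈ l.tail.dropLast, x ∉ W) ∧ (a, b) ∈ listEdges l ∧ a ∈ l ∧ b ∈ l := by
  classical
  obtain ⟨la, hca, hlasta, htaila, u, hu, hheada⟩ :
      ∃ la : List V, la.Chain' (fun x y => (x, y) ∈ F) ∧ la.getLast? = some a ∧
        (∀ x ∈ la.tail, x ∉ W) ∧ ∃ u ∈ W, la.head? = some u := by
    by_cases ha : a ∈ W
    · exact ⟨[a], by simp [List.Chain'], rfl, by simp, a, ha, rfl⟩
    · obtain ⟨l, hc, hlast, _, _, htail, w, hw, hhead⟩ := walk_bwd hF hVF hWends ha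
      exact ⟨l, hc, hlast, htail, w, hw, hhead⟩
  obtain ⟨lb, hcb, hheadb, hdropb, w, hw, hlastb⟩ :
      ∃ lb : List V, lb.Chain' (fun x y => (x, y) ∈ F) ∧ lb.head? = some b ∧
        (∀ x ∈ lb.dropLast, x ∉ W) ∧ ∃ w ∈ W, lb.getLast? = some w := by
    by_cases hb : b ∈ W
    · exact ⟨[b], by simp [List.Chain'], rfl, by simp, b, hb, rfl⟩
    · obtain ⟨l, hc, hhead, _, _, hdrop, w, hw, hlast⟩ := walk_fwd hF hVF hWends hb
      exact ⟨l, hc, hhead, hdrop, w, hw, hlast⟩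
  have hlane : la ≠ [] := by intro h; rw [h] at hlasta; simp at hlasta
  have hlbne : lb ≠ [] := by intro h; rw [h] at hheadb; simp at hheadb
  have hchain : (la ++ lb).Chain' (fun x y => (x, y) ∈ F) := by
    refine List.IsChain.append hca hcb ?_
    intro x hx y hy
    rw [hlasta] at hx
    rw [hheadb] at hy
    simp only [Option.mem_def, Option.some.injEq] at hx hy
    rw [← hx, ← hy]
    exact hab
  refine ⟨la ++ lb, hchain, ?_, ?_, ?_, ?_, ?_, ?_, ?_, ?_⟩
  · by_contra hnd
    exact hF.2.2 (hasCycle_of_dup hF.1 hchain hnd)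
  · have h1 : 1 ≤ la.length := List.length_pos_iff.mpr hlane
    have h2 : 1 ≤ lb.length := List.length_pos_iff.mpr hlbne
    simp only [List.length_append]
    omega
  · exact ⟨u, hu, by rw [List.head?_append_of_ne_nil _ hlane]; exact hheada⟩
  · exact ⟨w, hw, by rw [List.getLast?_append_of_ne_nil _ hlbne]; exact hlastb⟩
  · intro x hx
    cases la with
    | nil => exact absurd rfl hlane
    | cons u' ta =>
      rw [show (u' :: ta) ++ lb = u' :: (ta ++ lb) from rfl, List.tail_cons,
        List.dropLast_append_of_ne_nil hlbne, List.mem_append] at hx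
      rcases hx with hx | hx
      · exact htaila x (by simpa using hx)
      · exact hdropb x hx
  · cases lb with
    | nil => exact absurd rfl hlbne
    | cons hb tb =>
      have hhb : hb = b := by simpa using hheadb
      rw [hhb, listEdges_split b la tb, Finset.mem_union]
      left
      have hga : la.getLast hlane = a := by
        rw [List.getLast?_eq_getLast hlane] at hlasta
        simpa using hlasta
      rw [← hga]
      exact getLast_mem_listEdges b la hlane
  · exact List.mem_append_left _ (List.mem_of_mem_getLast? (by rw [hlasta]; rfl))
  · exact List.mem_append_right _ (List.mem_of_mem_head? (by rw [hheadb]; rfl))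

end HCaux
namespace HCaux
open List

variable {V : Type} [DecidableEq V]

/-- Consecutive pairs of a list. -/
def pairsOf (l : List V) : List (V × V) := l.zip l.tail

lemma pairsOf_cons₂ (a b : V) (t : List V) :
    pairsOf (a :: b :: t) = (a, b) :: pairsOf (b :: t) := rfl

lemma pairsOf_map_fst : ∀ l : List V, (pairsOf l).map Prod.fst = l.dropLast := by
  intro l
  induction l with
  | nil => rfl
  | cons a t ih =>
    cases t with
    | nil => rfl
    | cons b t' =>
      rw [pairsOf_cons₂, List.map_cons, ih]
      rfl

lemma pairsOf_chain : ∀ l : List V, (pairsOf l).Chain' (fun e e' => e.2 = e'.1) := by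
  intro l
  induction l with
  | nil => exact List.isChain_nil
  | cons a t ih =>
    cases t with
    | nil => simp [pairsOf, List.Chain']
    | cons b t' =>
      rw [pairsOf_cons₂]
      cases t' with
      | nil => simp [pairsOf, List.Chain']
      | cons c t'' =>
        rw [pairsOf_cons₂] at ih ⊢
        exact List.isChain_cons_cons.mpr ⟨rfl, ih⟩

lemma pairsOf_getLast_snd : ∀ (l : List V) (x : V × V),
    (pairsOf l).getLast? = some x → l.getLast? = some x.2 := by
  intro l
  induction l with
  | nil => intro x hx; simp [pairsOf] at hx
  | cons a t ih =>
    cases t with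
    | nil => intro x hx; simp [pairsOf] at hx
    | cons b t' =>
      intro x hx
      rw [pairsOf_cons₂] at hx
      cases t' with
      | nil =>
        simp [pairsOf] at hx
        rw [← hx]
        rfl
      | cons c t'' =>
        rw [List.getLast?_cons_cons]
        apply ih
        rw [pairsOf_cons₂] at hx ⊢
        rwa [List.getLast?_cons_cons] at hx
  
lemma pairsOf_head_fst : ∀ (l : List V) (x : V × V),
    (pairsOf l).head? = some x → l.head? = some x.1 := by
  intro l
  cases l with
  | nil => intro x hx; simp [pairsOf] at hx
  | cons a t =>
    cases t with
    | nil => intro x hx; simp [pairsOf] at hx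
    | cons b t' =>
      intro x hx
      rw [pairsOf_cons₂] at hx
      simp at hx
      rw [← hx]
      rfl

lemma pairsOf_ne_nil {l : List V} (h : 2 ≤ l.length) : pairsOf l ≠ [] := by
  cases l with
  | nil => simp at h
  | cons a t =>
    cases t with
    | nil => simp at h
    | cons b t' => rw [pairsOf_cons₂]; simp

lemma zip_append_left : ∀ {l1 : List V} {t : List V} (l2 : List V),
    t.length ≤ l1.length → (l1 ++ l2).zip t = l1.zip t := by
  intro l1
  induction l1 with
  | nil =>
    intro t l2 ht
    cases t with
    | nil => simp
    | cons x t' => simp at ht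
  | cons a l1' ih =>
    intro t l2 ht
    cases t with
    | nil => simp
    | cons x t' =>
      simp only [List.cons_append, List.zip_cons_cons, List.cons.injEq, true_and]
      exact ih l2 (by simpa using ht)

lemma cycleEdges_eq_listEdges {l : List V} (h : l ≠ []) :
    cycleEdges l = listEdges (l ++ [l.head h]) := by
  cases l with
  | nil => exact absurd rfl h
  | cons a t =>
    unfold cycleEdges listEdges
    rw [List.rotate_cons_succ, List.rotate_zero]
    congr 1
    rw [show ((a :: t) ++ [(a :: t).head h]).tail = t ++ [a] from rfl]
    rw [show (a :: t) ++ [(a :: t).head h] = (a :: t) ++ [a] from rfl]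
    rw [zip_append_left [a] (by simp)]

lemma mem_foldr_union {α : Type} [DecidableEq α] {β : Type} :
    ∀ (ps : List β) (f : β → Finset α) (x : α),
    x ∈ ps.foldr (fun e s => f e ∪ s) ∅ ↔ ∃ e ∈ ps, x ∈ f e := by
  intro ps f x
  induction ps with
  | nil => simp
  | cons e ps' ih => simp [ih]

lemma head?_dropLast_of_two_le {l : List V} (h : 2 ≤ l.length) :
    l.dropLast.head? = l.head? := by
  rw [List.head?_dropLast]
  rw [if_pos (by omega)]

lemma splice (full : V × V → List V) :
    ∀ (ps : List (V × V)) (z : V),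
      (∀ e ∈ ps, (full e).head? = some e.1 ∧ (full e).getLast? = some e.2 ∧
        2 ≤ (full e).length) →
      ps.Chain' (fun e e' => e.2 = e'.1) →
      (∀ h : ps ≠ [], (ps.getLast h).2 = z) →
      listEdges ((ps.flatMap (fun e => (full e).dropLast)) ++ [z]) =
        ps.foldr (fun e s => listEdges (full e) ∪ s) ∅ := by
  intro ps
  induction ps with
  | nil =>
    intro z _ _ _
    simp [listEdges_singleton]
  | cons e ps' ih =>
    intro z hfull hchain hz
    have hfe := hfull e (by simp)
    have hBhead : ((ps'.flatMap (fun e => (full e).dropLast)) ++ [z]).head? = some e.2 := by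
      cases ps' with
      | nil =>
        have := hz (by simp)
        simp at this
        simp [this]
      | cons e' ps'' =>
        have hfe' := hfull e' (by simp)
        have hne' : (full e').dropLast ≠ [] := by
          have := hfe'.2.2
          intro hcon
          have := congrArg List.length hcon
          simp at this
          omega
        rw [List.flatMap_cons, List.append_assoc,
          List.head?_append_of_ne_nil _ hne',
          head?_dropLast_of_two_le hfe'.2.2, hfe'.1]
        have : e.2 = e'.1 := (List.isChain_cons_cons.mp hchain).1
        rw [this]
    set B := (ps'.flatMap (fun e => (full e).dropLast)) ++ [z] with hB
    obtain ⟨B1, hB1⟩ : ∃ t, B = e.2 :: t := by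
      cases hBc : B with
      | nil => rw [hBc] at hBhead; simp at hBhead
      | cons b t =>
        rw [hBc] at hBhead
        simp at hBhead
        exact ⟨t, by rw [← hBhead]⟩
    rw [List.flatMap_cons, List.append_assoc, ← hB, hB1,
      listEdges_split e.2 (full e).dropLast B1,
      List.dropLast_append_getLast? e.2 hfe.2.1, ← hB1]
    rw [List.foldr_cons, ih z (fun e' he' => hfull e' (by simp [he'])) 
      (List.isChain_cons.mp hchain).2 ?_]
    intro h
    have := hz (by simp)
    rwa [List.getLast_cons h] at this

end HCaux
namespace HCaux
open List

variable {V : Type} [DecidableEq V]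

lemma mem_tail_dropLast {l : List V} {x u w : V} (hx : x ∈ l)
    (hh : l.head? = some u) (hl : l.getLast? = some w) (hxu : x ≠ u) (hxw : x ≠ w) :
    x ∈ l.tail.dropLast := by
  cases l with
  | nil => simp at hx
  | cons a t =>
    simp only [List.head?_cons, Option.some.injEq] at hh
    subst hh
    rcases List.mem_cons.mp hx with rfl | hx
    · exact absurd rfl hxu
    cases htne : t with
    | nil => subst htne; simp at hx
    | cons c t' =>
      rw [← htne]
      have htne' : t ≠ [] := by rw [htne]; simp
      have hwt : t.getLast htne' = w := by
        rw [List.getLast?_eq_getLast (by simp [htne'] : a :: t ≠ [])] at hl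
        rw [List.getLast_cons htne'] at hl
        simpa using hl
      rw [List.tail_cons]
      have := List.dropLast_append_getLast htne'
      rw [← this] at hx
      rcases List.mem_append.mp hx with hx | hx
      · exact hx
      · simp only [List.mem_singleton] at hx
        rw [hwt] at hx
        exact absurd hx hxw

lemma interior_prefix {E : V → V → Prop} {l : List V} {x : V}
    (hx : x ∈ l.tail.dropLast) (hc : l.Chain' E) (hxh : l.head? ≠ some x) :
    ∃ p : List V, p.Chain' E ∧ p.head? = l.head? ∧ p.getLast? = some x ∧
      2 ≤ p.length ∧ (∀ y ∈ p.tail.dropLast, y ∈ l.tail.dropLast) := by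
  have hxl : x ∈ l := List.tail_subset l (List.mem_of_mem_dropLast hx)
  obtain ⟨s, t, hst⟩ := List.append_of_mem hxl
  have hsne : s ≠ [] := by
    intro h
    subst h
    rw [hst] at hxh
    simp at hxh
  refine ⟨s ++ [x], ?_, ?_, ?_, ?_, ?_⟩
  · have : l = (s ++ [x]) ++ t := by rw [hst]; simp
    rw [this] at hc
    exact (List.isChain_append.mp hc).1
  · rw [hst, List.head?_append_of_ne_nil _ hsne, List.head?_append_of_ne_nil _ hsne]
  · exact List.getLast?_concat
  · have : 1 ≤ s.length := List.length_pos_iff.mpr hsne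
    simp only [List.length_append, List.length_singleton]
    omega
  · intro y hy
    have h1 : (s ++ [x]).tail.dropLast = s.tail := by
      rw [← List.tail_dropLast, List.dropLast_concat]
    rw [h1] at hy
    have h2 : l.tail = s.tail ++ x :: t := by
      rw [hst]
      cases s with
      | nil => exact absurd rfl hsne
      | cons a s' => rfl
    rw [h2, List.dropLast_append_of_ne_nil (by simp), List.mem_append]
    left
    exact hy

end HCaux

open HCaux

/-- If `F̃` is the contraction of a spanning linear forest `F`
onto a set `W` containing all endpoints of its paths, and `C̃` is a Hamilton cycle
on `W` containing `F̃` whose remaining edges avoid `F`, then `(C̃ ∖ F̃) ∪ F` is a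
Hamilton cycle on the whole vertex set. -/
theorem close_forest_into_hamilton_cycle {V : Type} [Fintype V] [DecidableEq V]
    (F : Finset (V × V))
    (hF : IsLinearForest F)
    (hVF : verts F = Finset.univ)
    (W : Finset V)
    (hWcard : 2 ≤ W.card)
    (hWends : startSet F ∪ endSet F ⊆ W)
    (Ft : Finset (V × V))
    (hFt : ∀ u v : V, (u, v) ∈ Ft ↔
      (u ∈ W ∧ v ∈ W ∧
        ∃ l : List V, IsPathList F l ∧ l.head? = some u ∧ l.getLast? = some v ∧
          ∀ x ∈ l.tail.dropLast, x ∉ W))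
    (Ct : Finset (V × V))
    (hCt : IsHamCycleOn Ct W)
    (hsub : Ft ⊆ Ct)
    (hdisj : Disjoint (Ct \ Ft) F) :
    IsHamCycleOn ((Ct \ Ft) ∪ F) Finset.univ := by
  classical
  obtain ⟨L, hLne, hLnd, hLW, hLCt⟩ := hCt
  have hP : ∀ e : V × V, e ∈ Ft → ∃ l : List V, IsPathList F l ∧ l.head? = some e.1 ∧
      l.getLast? = some e.2 ∧ ∀ x ∈ l.tail.dropLast, x ∉ W := by
    intro e he
    exact ((hFt e.1 e.2).mp (by simpa using he)).2.2
  have heW : ∀ e : V × V, e ∈ Ft → e.1 ∈ W ∧ e.2 ∈ W := by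
    intro e he
    have := (hFt e.1 e.2).mp (by simpa using he)
    exact ⟨this.1, this.2.1⟩
  obtain ⟨full, hfull1, hfull2⟩ : ∃ full : V × V → List V,
      (∀ e ∈ Ft, IsPathList F (full e) ∧ (full e).head? = some e.1 ∧
        (full e).getLast? = some e.2 ∧ ∀ x ∈ (full e).tail.dropLast, x ∉ W) ∧
      (∀ e : V × V, e ∉ Ft → full e = [e.1, e.2]) := by
    refine ⟨fun e => if h : e ∈ Ft then (hP e h).choose else [e.1, e.2], ?_, ?_⟩
    · intro e he
      simp only [dif_pos he]
      exact (hP e he).choose_spec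
    · intro e he
      simp only [dif_neg he]
  -- uniqueness of the witness path of an edge of Ft
  have huniq : ∀ e ∈ Ft, ∀ l : List V, l.Chain' (fun a b => (a, b) ∈ F) →
      2 ≤ l.length → l.head? = some e.1 → (∀ x, l.getLast? = some x → x ∈ W) →
      (∀ x ∈ l.tail.dropLast, x ∉ W) → l = full e := by
    intro e he l hc hlen hhead hlast hint
    obtain ⟨⟨hfl, hfnd, hfc⟩, hfh, hfg, hfint⟩ := hfull1 e he
    refine PU_fwd hF.1 hc hfc (by rw [hhead, hfh]) hlen hfl hint hfint hlast ?_
    intro x hx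
    rw [hfg] at hx
    injection hx with hx
    rw [← hx]
    exact (heW e he).2
  -- every edge of F lies on the witness path of some edge of Ft
  have K1 : ∀ a b : V, (a, b) ∈ F → ∃ e ∈ Ft, (a, b) ∈ listEdges (full e) := by
    intro a b hab
    obtain ⟨l, hc, hnd, hlen, ⟨u, hu, hhead⟩, ⟨w, hw, hlast⟩, hint, hmem, _, _⟩ :=
      exist_path hF hVF hWends hab
    have heFt : (u, w) ∈ Ft := (hFt u w).mpr ⟨hu, hw, l, ⟨hlen, hnd, hc⟩, hhead, hlast, hint⟩
    refine ⟨(u, w), heFt, ?_⟩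
    have heq := huniq (u, w) heFt l hc hlen hhead
      (fun x hx => by rw [hlast] at hx; injection hx with hx; rw [← hx]; exact hw) hint
    rw [← heq]
    exact hmem
  -- every vertex outside W is interior to the witness path of some edge of Ft
  have K2 : ∀ x : V, x ∉ W → ∃ e ∈ Ft, x ∈ (full e).tail.dropLast := by
    intro x hxW
    have hdeg := deg_of_not_mem_W hF hVF hWends hxW
    have hedge : (x, fsucc F x) ∈ F := fsucc_mem (outDeg_pos_iff.mp (by omega))
    obtain ⟨l, hc, hnd, hlen, ⟨u, hu, hhead⟩, ⟨w, hw, hlast⟩, hint, hmem, hxl, _⟩ :=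
      exist_path hF hVF hWends hedge
    have heFt : (u, w) ∈ Ft := (hFt u w).mpr ⟨hu, hw, l, ⟨hlen, hnd, hc⟩, hhead, hlast, hint⟩
    refine ⟨(u, w), heFt, ?_⟩
    have heq := huniq (u, w) heFt l hc hlen hhead
      (fun y hy => by rw [hlast] at hy; injection hy with hy; rw [← hy]; exact hw) hint
    rw [← heq]
    exact mem_tail_dropLast hxl hhead hlast
      (fun h => hxW (h ▸ hu)) (fun h => hxW (h ▸ hw))
  -- interiors of distinct witness paths are disjoint
  have K3 : ∀ e ∈ Ft, ∀ e' ∈ Ft, e ≠ e' →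
      ∀ x ∈ (full e).tail.dropLast, x ∉ (full e').tail.dropLast := by
    intro e he e' he' hne x hx hx'
    obtain ⟨⟨hl1, hnd1, hc1⟩, hh1, hg1, hi1⟩ := hfull1 e he
    obtain ⟨⟨hl2, hnd2, hc2⟩, hh2, hg2, hi2⟩ := hfull1 e' he'
    have hxW : x ∉ W := hi1 x hx
    obtain ⟨p1, hpc1, hph1, hpg1, hpl1, hpi1⟩ := interior_prefix hx hc1
      (by rw [hh1]; intro hcon; injection hcon with hcon; exact hxW (hcon ▸ (heW e he).1))
    obtain ⟨p2, hpc2, hph2, hpg2, hpl2, hpi2⟩ := interior_prefix hx' hc2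
      (by rw [hh2]; intro hcon; injection hcon with hcon; exact hxW (hcon ▸ (heW e' he').1))
    have hpeq := PU_bwd hF.2.1 hpc1 hpc2 (by rw [hpg1, hpg2]) hpl1 hpl2
      (fun y hy => hi1 y (hpi1 y hy)) (fun y hy => hi2 y (hpi2 y hy))
      (fun y hy => by
        rw [hph1, hh1] at hy; injection hy with hy; rw [← hy]; exact (heW e he).1)
      (fun y hy => by
        rw [hph2, hh2] at hy; injection hy with hy; rw [← hy]; exact (heW e' he').1)
    have h11 : e.1 = e'.1 := by
      have hcg := congrArg List.head? hpeq
      rw [hph1, hph2, hh1, hh2] at hcg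
      injection hcg
    have hfeq : full e = full e' := PU_fwd hF.1 hc1 hc2 (by rw [hh1, hh2, h11])
      hl1 hl2 hi1 hi2
      (fun y hy => by rw [hg1] at hy; injection hy with hy; rw [← hy]; exact (heW e he).2)
      (fun y hy => by rw [hg2] at hy; injection hy with hy; rw [← hy]; exact (heW e' he').2)
    apply hne
    have h22 : e.2 = e'.2 := by
      have hcg := congrArg List.getLast? hfeq
      rw [hg1, hg2] at hcg
      injection hcg
    exact Prod.ext h11 h22
  -- setting up the cyclic pair list
  set z := L.head hLne with hz
  set l₀ : List V := L ++ [z] with hl₀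
  have hl₀ne : l₀ ≠ [] := by simp [hl₀]
  set ps := pairsOf l₀ with hps
  have hLlen : 2 ≤ L.length := by
    rw [← List.toFinset_card_of_nodup hLnd, hLW]
    exact hWcard
  have hCtps : Ct = ps.toFinset := by
    rw [hLCt, cycleEdges_eq_listEdges hLne]
    rfl
  have hfst : ps.map Prod.fst = L := by
    rw [hps, pairsOf_map_fst, hl₀, List.dropLast_concat]
  have hzW : z ∈ W := by
    rw [← hLW]
    exact List.mem_toFinset.mpr (hz ▸ List.head_mem hLne)
  have hl₀W : ∀ x ∈ l₀, x ∈ W := by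
    intro x hx
    rw [hl₀, List.mem_append] at hx
    rcases hx with hx | hx
    · rw [← hLW]; exact List.mem_toFinset.mpr hx
    · simp only [List.mem_singleton] at hx
      rw [hx]; exact hzW
  have hpsW : ∀ e ∈ ps, e.1 ∈ W ∧ e.2 ∈ W := by
    intro e he
    rw [hps] at he
    obtain ⟨a, b⟩ := e
    have := List.of_mem_zip he
    exact ⟨hl₀W a this.1, hl₀W b (List.tail_subset _ this.2)⟩
  have hfull_ps : ∀ e ∈ ps, (full e).head? = some e.1 ∧ (full e).getLast? = some e.2 ∧
      2 ≤ (full e).length := by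
    intro e he
    by_cases heFt : e ∈ Ft
    · obtain ⟨⟨hfl, _, _⟩, hfh, hfg, _⟩ := hfull1 e heFt
      exact ⟨hfh, hfg, hfl⟩
    · rw [hfull2 e heFt]
      exact ⟨rfl, rfl, by simp⟩
  have hsegne : ∀ e ∈ ps, (full e).dropLast ≠ [] := by
    intro e he
    obtain ⟨_, _, hfl⟩ := hfull_ps e he
    intro hcon
    have := congrArg List.length hcon
    simp at this
    omega
  have hseghead : ∀ e ∈ ps, (full e).dropLast.head? = some e.1 := by
    intro e he
    obtain ⟨hfh, _, hfl⟩ := hfull_ps e he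
    rw [head?_dropLast_of_two_le hfl, hfh]
  -- interior of a segment
  have hintW : ∀ e ∈ ps, ∀ y ∈ (full e).tail.dropLast, y ∉ W ∧ e ∈ Ft := by
    intro e he y hy
    by_cases heFt : e ∈ Ft
    · exact ⟨(hfull1 e heFt).2.2.2 y hy, heFt⟩
    · rw [hfull2 e heFt] at hy
      simp at hy
  have hsegmem : ∀ e ∈ ps, ∀ x : V,
      x ∈ (full e).dropLast ↔ (x = e.1 ∨ x ∈ (full e).tail.dropLast) := by
    intro e he x
    obtain ⟨hfh, _, hfl⟩ := hfull_ps e he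
    obtain ⟨t, ht⟩ : ∃ t, full e = e.1 :: t := by
      cases hfe : full e with
      | nil => rw [hfe] at hfh; simp at hfh
      | cons a t =>
        rw [hfe] at hfh
        simp only [List.head?_cons, Option.some.injEq] at hfh
        exact ⟨t, by rw [hfh]⟩
    cases t with
    | nil => rw [ht] at hfl; simp at hfl
    | cons c t' =>
      rw [ht]
      simp only [List.tail_cons]
      rw [show (e.1 :: c :: t').dropLast = e.1 :: (c :: t').dropLast from rfl]
      simp
  set l' := ps.flatMap (fun e => (full e).dropLast) with hl'
  have hpsne : ps ≠ [] := by
    rw [hps]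
    apply pairsOf_ne_nil
    rw [hl₀]
    simp only [List.length_append, List.length_singleton]
    omega
  have hl₀head : l₀.head? = some z := by
    rw [hl₀, List.head?_append_of_ne_nil _ hLne, hz]
    exact List.head?_eq_head hLne
  have hl'head : l'.head? = some z := by
    cases hpsc : ps with
    | nil => exact absurd hpsc hpsne
    | cons e₀ rest =>
      have he₀ : e₀ ∈ ps := by rw [hpsc]; simp
      rw [hl', hpsc, List.flatMap_cons,
        List.head?_append_of_ne_nil _ (hsegne e₀ he₀), hseghead e₀ he₀]
      have h1 : l₀.head? = some e₀.1 := by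
        apply pairsOf_head_fst
        rw [← hps, hpsc]
        rfl
      rw [hl₀head] at h1
      injection h1 with h1
      rw [h1]
  have hl'ne : l' ≠ [] := by
    intro h
    rw [h] at hl'head
    simp at hl'head
  -- Nodup
  have hpsnodup : ps.Nodup := List.Nodup.of_map Prod.fst (by rw [hfst]; exact hLnd)
  have hinj : ∀ e ∈ ps, ∀ e' ∈ ps, e.1 = e'.1 → e = e' := by
    intro e he e' he' h
    exact List.inj_on_of_nodup_map (by rw [hfst]; exact hLnd) he he' h
  have hnodup : l'.Nodup := by
    rw [hl', List.nodup_flatMap]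
    constructor
    · intro e he
      by_cases heFt : e ∈ Ft
      · exact List.Nodup.sublist (List.dropLast_sublist _) (hfull1 e heFt).1.2.1
      · rw [hfull2 e heFt]
        simp
    · refine hpsnodup.imp_of_mem ?_
      intro e e' he he' hne
      intro x hxe hxe'
      rw [hsegmem e he] at hxe
      rw [hsegmem e' he'] at hxe'
      rcases hxe with rfl | h1
      · rcases hxe' with h2 | h2
        · exact hne (hinj e he e' he' h2)
        · exact (hintW e' he' e.1 h2).1 (hpsW e he).1
      · rcases hxe' with rfl | h2
        · exact (hintW e he _ h1).1 (hpsW e' he').1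
        · exact K3 e (hintW e he x h1).2 e' (hintW e' he' x h2).2 hne x h1 h2
  -- spanning
  have huniv : l'.toFinset = Finset.univ := by
    apply Finset.eq_univ_iff_forall.mpr
    intro v
    rw [List.mem_toFinset, hl', List.mem_flatMap]
    by_cases hvW : v ∈ W
    · have hvL : v ∈ L := by rw [← hLW] at hvW; exact List.mem_toFinset.mp hvW
      have : v ∈ ps.map Prod.fst := by rw [hfst]; exact hvL
      obtain ⟨e, he, hev⟩ := List.mem_map.mp this
      exact ⟨e, he, by rw [hsegmem e he v]; left; exact hev.symm⟩
    · obtain ⟨e, he, hx⟩ := K2 v hvW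
      have heps : e ∈ ps := by
        have := hsub he
        rw [hCtps] at this
        exact List.mem_toFinset.mp this
      exact ⟨e, heps, by rw [hsegmem e heps v]; right; exact hx⟩
  refine ⟨l', hl'ne, hnodup, huniv, ?_⟩
  rw [cycleEdges_eq_listEdges hl'ne]
  have hhead_eq : l'.head hl'ne = z := by
    have h := List.head?_eq_head hl'ne
    rw [hl'head] at h
    injection h with h
    exact h.symm
  rw [hhead_eq]
  have hzlast : ∀ h : ps ≠ [], (ps.getLast h).2 = z := by
    intro h
    have hgl : ps.getLast? = some (ps.getLast h) := List.getLast?_eq_getLast h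
    have := pairsOf_getLast_snd l₀ (ps.getLast h) (by rw [← hps]; exact hgl)
    have h2 : l₀.getLast? = some z := by rw [hl₀]; exact List.getLast?_concat
    rw [h2] at this
    injection this with this
    exact this.symm
  rw [hl', splice full ps z hfull_ps (by rw [hps]; exact pairsOf_chain l₀) hzlast]
  ext x
  rw [mem_foldr_union]
  constructor
  · intro hx
    rcases Finset.mem_union.mp hx with hx | hx
    · obtain ⟨hxCt, hxFt⟩ := Finset.mem_sdiff.mp hx
      refine ⟨x, by rw [hCtps] at hxCt; exact List.mem_toFinset.mp hxCt, ?_⟩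
      rw [hfull2 x hxFt, listEdges_cons₂]
      simp
    · obtain ⟨e, he, hmem⟩ := K1 x.1 x.2 (by simpa using hx)
      refine ⟨e, ?_, by simpa using hmem⟩
      have := hsub he
      rw [hCtps] at this
      exact List.mem_toFinset.mp this
  · rintro ⟨e, he, hmem⟩
    by_cases heFt : e ∈ Ft
    · apply Finset.mem_union_right
      exact listEdges_subset_of_chain (hfull1 e heFt).1.2.2 hmem
    · rw [hfull2 e heFt, listEdges_cons₂, listEdges_singleton] at hmem
      simp only [Finset.mem_insert, Finset.notMem_empty, or_false] at hmem
      apply Finset.mem_union_left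
      rw [Finset.mem_sdiff]
      constructor
      · rw [hCtps]
        apply List.mem_toFinset.mpr
        rw [hmem]
        simpa using he
      · rw [hmem]
        simpa using heFt
end

section
/- Let V be a finite set partitioned into U₁, U₂, U₃, U₄ and let U* ⊆ V satisfy |U* ∩ U₁| = |U* ∩ U₂| = |U* ∩ U₃| = |U* ∩ U₄|. Let F be a linear forest on V such that every edge of F joins two consecutive classes U_i and U_{i+1} (indices mod 4, in either direction), every vertex of U* has in-degree and out-degree exactly 1 in F, and the number of edges of F directed from U_{i+1} to U_i is the same for every i ∈ [4]. Then for each i ∈ {1,2,3}, the number of vertices v ∈ U_i∖U* with d_F⁺(v) = 1 equals the number of vertices v ∈ U_{i+1}∖U* with d_F⁻(v) = 1. -/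
open Finset

variable {V : Type}

section Aux
variable [DecidableEq V]

lemma sum_outDeg_eq (F : Finset (V × V)) (S : Finset V) :
    ∑ v ∈ S, outDeg F v = (F.filter (fun e => e.1 ∈ S)).card := by
  rw [Finset.card_eq_sum_card_fiberwise (f := Prod.fst) (s := F.filter (fun e => e.1 ∈ S)) (t := S)
    (fun e he => (Finset.mem_filter.mp he).2)]
  refine Finset.sum_congr rfl fun v hv => ?_
  unfold outDeg
  congr 1
  ext e
  simp only [Finset.mem_filter]
  constructor
  · rintro ⟨h1, h2⟩; exact ⟨⟨h1, h2 ▸ hv⟩, h2⟩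
  · rintro ⟨⟨h1, _⟩, h2⟩; exact ⟨h1, h2⟩

lemma sum_inDeg_eq (F : Finset (V × V)) (S : Finset V) :
    ∑ v ∈ S, inDeg F v = (F.filter (fun e => e.2 ∈ S)).card := by
  rw [Finset.card_eq_sum_card_fiberwise (f := Prod.snd) (s := F.filter (fun e => e.2 ∈ S)) (t := S)
    (fun e he => (Finset.mem_filter.mp he).2)]
  refine Finset.sum_congr rfl fun v hv => ?_
  unfold inDeg
  congr 1
  ext e
  simp only [Finset.mem_filter]
  constructor
  · rintro ⟨h1, h2⟩; exact ⟨⟨h1, h2 ▸ hv⟩, h2⟩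
  · rintro ⟨⟨h1, _⟩, h2⟩; exact ⟨h1, h2⟩

lemma card_filter_of_le_one (F : Finset (V × V)) (S : Finset V) (d : V → ℕ)
    (hle : ∀ v, d v ≤ 1) :
    (S.filter (fun v => d v = 1)).card = ∑ v ∈ S, d v := by
  rw [Finset.card_filter]
  refine Finset.sum_congr rfl fun v _ => ?_
  rcases Nat.le_one_iff_eq_zero_or_eq_one.mp (hle v) with h | h <;> simp [h]

end Aux

/-- In a feasible-system-like linear forest, for each `i ∈ {1,2,3}`
the number of vertices of `U_i ∖ U*` with out-degree `1` equals the number of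
vertices of `U_{i+1} ∖ U*` with in-degree `1`. -/
theorem matched_degree_counts {V : Type} [Fintype V] [DecidableEq V]
    (U : Fin 4 → Finset V) (Ustar : Finset V)
    (hdisj : ∀ i j, i ≠ j → Disjoint (U i) (U j))
    (hcover : U 0 ∪ U 1 ∪ U 2 ∪ U 3 = Finset.univ)
    (hbal : ∀ i j : Fin 4, (Ustar ∩ U i).card = (Ustar ∩ U j).card)
    (F : Finset (V × V))
    (hF : IsLinearForest F)
    (hcons : ∀ e ∈ F, ∃ i : Fin 4,
      (e.1 ∈ U i ∧ e.2 ∈ U (i + 1)) ∨ (e.1 ∈ U (i + 1) ∧ e.2 ∈ U i))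
    (hdeg : ∀ v ∈ Ustar, outDeg F v = 1 ∧ inDeg F v = 1)
    (hback : ∀ i j : Fin 4, eCount F (U (i + 1)) (U i) = eCount F (U (j + 1)) (U j)) :
    ∀ i : Fin 4, i ≠ 3 →
      ((U i \ Ustar).filter (fun v => outDeg F v = 1)).card =
        ((U (i + 1) \ Ustar).filter (fun v => inDeg F v = 1)).card := by
  intro i _
  have huniq : ∀ {x : V} {a b : Fin 4}, x ∈ U a → x ∈ U b → a = b := by
    intro x a b ha hb
    by_contra h
    exact Finset.disjoint_left.mp (hdisj a b h) ha hb
  have h31 : ∀ k : Fin 4, k + 3 + 1 = k := by decide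
  have h11 : ∀ k : Fin 4, k + 1 + 1 = k + 2 := by decide
  have h13 : ∀ k : Fin 4, k + 1 ≠ k + 3 := by decide
  -- classify edges out of U i
  have hout : ∀ e ∈ F, e.1 ∈ U i → e.2 ∈ U (i + 1) ∨ e.2 ∈ U (i + 3) := by
    intro e he h1
    obtain ⟨k, hk | hk⟩ := hcons e he
    · obtain rfl := huniq hk.1 h1
      exact Or.inl hk.2
    · have hk1 : k + 1 = i := huniq hk.1 h1
      right
      have : k = i + 3 := by rw [← hk1]; exact (by decide : ∀ k : Fin 4, k = k + 1 + 3) k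
      exact this ▸ hk.2
  -- classify edges into U (i+1)
  have hin : ∀ e ∈ F, e.2 ∈ U (i + 1) → e.1 ∈ U i ∨ e.1 ∈ U (i + 2) := by
    intro e he h2
    obtain ⟨k, hk | hk⟩ := hcons e he
    · have hk1 : k + 1 = i + 1 := huniq hk.2 h2
      left
      have : k = i := by rw [← add_left_inj 1, hk1]
      exact this ▸ hk.1
    · have hk1 : k = i + 1 := huniq hk.2 h2
      right
      have : k + 1 = i + 2 := by rw [hk1, h11]
      exact this ▸ hk.1
  -- split edge counts
  have eq_out : (F.filter (fun e => e.1 ∈ U i)).card =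
      eCount F (U i) (U (i + 1)) + eCount F (U i) (U (i + 3)) := by
    unfold eCount
    rw [← Finset.card_union_of_disjoint]
    · congr 1
      ext e
      simp only [Finset.mem_union, Finset.mem_filter]
      constructor
      · rintro ⟨he, h1⟩
        rcases hout e he h1 with h | h
        · exact Or.inl ⟨he, h1, h⟩
        · exact Or.inr ⟨he, h1, h⟩
      · rintro (⟨he, h1, _⟩ | ⟨he, h1, _⟩) <;> exact ⟨he, h1⟩
    · rw [Finset.disjoint_left]
      rintro e he he'
      simp only [Finset.mem_filter] at he he'
      exact absurd (huniq he.2.2 he'.2.2) (h13 i)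
  have h02 : ∀ k : Fin 4, k ≠ k + 2 := by decide
  have eq_in : (F.filter (fun e => e.2 ∈ U (i + 1))).card =
      eCount F (U i) (U (i + 1)) + eCount F (U (i + 2)) (U (i + 1)) := by
    unfold eCount
    rw [← Finset.card_union_of_disjoint]
    · congr 1
      ext e
      simp only [Finset.mem_union, Finset.mem_filter]
      constructor
      · rintro ⟨he, h2⟩
        rcases hin e he h2 with h | h
        · exact Or.inl ⟨he, h, h2⟩
        · exact Or.inr ⟨he, h, h2⟩
      · rintro (⟨he, _, h2⟩ | ⟨he, _, h2⟩) <;> exact ⟨he, h2⟩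
    · rw [Finset.disjoint_left]
      rintro e he he'
      simp only [Finset.mem_filter] at he he'
      exact absurd (huniq he.2.1 he'.2.1) (h02 i)
  -- split off the Ustar part of the vertex counts
  have split_star : ∀ (j : Fin 4) (p : V → Prop) [DecidablePred p], (∀ v ∈ Ustar, p v) →
      ((U j).filter p).card =
        ((U j \ Ustar).filter p).card + (Ustar ∩ U j).card := by
    intro j p _ hp
    rw [← Finset.card_union_of_disjoint]
    · congr 1
      ext x
      simp only [Finset.mem_union, Finset.mem_filter, Finset.mem_sdiff, Finset.mem_inter]
      constructor
      · rintro ⟨hx, hpx⟩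
        by_cases hs : x ∈ Ustar
        · exact Or.inr ⟨hs, hx⟩
        · exact Or.inl ⟨⟨hx, hs⟩, hpx⟩
      · rintro (⟨⟨hx, _⟩, hpx⟩ | ⟨hs, hx⟩)
        · exact ⟨hx, hpx⟩
        · exact ⟨hx, hp x hs⟩
    · rw [Finset.disjoint_left]
      rintro x hx hx'
      simp only [Finset.mem_filter, Finset.mem_sdiff] at hx
      exact hx.1.2 (Finset.mem_inter.mp hx').1
  have key1 : ((U i \ Ustar).filter (fun v => outDeg F v = 1)).card + (Ustar ∩ U i).card =
      eCount F (U i) (U (i + 1)) + eCount F (U i) (U (i + 3)) := by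
    rw [← split_star i _ (fun v hv => (hdeg v hv).1), card_filter_of_le_one F _ _ hF.1,
      sum_outDeg_eq, eq_out]
  have key2 : ((U (i + 1) \ Ustar).filter (fun v => inDeg F v = 1)).card
        + (Ustar ∩ U (i + 1)).card =
      eCount F (U i) (U (i + 1)) + eCount F (U (i + 2)) (U (i + 1)) := by
    rw [← split_star (i + 1) _ (fun v hv => (hdeg v hv).2), card_filter_of_le_one F _ _ hF.2.1,
      sum_inDeg_eq, eq_in]
  have hb : eCount F (U i) (U (i + 3)) = eCount F (U (i + 2)) (U (i + 1)) := by
    have := hback (i + 3) (i + 1)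
    rwa [h31 i, h11 i] at this
  have hc := hbal i (i + 1)
  omega
end
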